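/- arXiv:1508.01930 — 6 statements merged into one kernel-verified Lean document; each statement's English description precedes it below -/
import Mathlib

section
/- Let X be a Banach space, Y a normed space, F : X ⇉ Y a closed set-valued map (gph F closed), (x̄,ȳ) ∈ gph F, (u,v) ∈ X×Y and γ ∈ (0,1]. Then F is directionally metrically γ-regular at (x̄,ȳ) in direction (u,v) with modulus τ > 0 if and only if there exist reals τ, δ > 0 such that d(x, F⁻¹(y)) ≤ τ φ(x,y)^γ for all (x,y) ∈ B((x̄,ȳ), δ) ∩ ((x̄,ȳ) + cone B((u,v), δ)) with d(y, F(x)) ≤ δ ‖(x,y) − (x̄,ȳ)‖^{1/γ}, where φ(x,y) := liminf_{u'→x} d(y, F(u')) is the lower semicontinuous envelope of (x,y) ↦ d(y, F(x)). -/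
open Filter Metric Set Topology
open scoped ENNReal NNReal

noncomputable section

/-- The conic hull `⋃ λ ≥ 0, λ • B((u,v), ε)` of the open ball of radius `ε` around `(u, v)`
in `X × Y`, where `X × Y` carries the sum norm `‖(x,y)‖ = ‖x‖ + ‖y‖`. -/
def coneBall2 {X Y : Type*} [NormedAddCommGroup X] [NormedSpace ℝ X]
    [NormedAddCommGroup Y] [NormedSpace ℝ Y] (u : X) (v : Y) (ε : ℝ) : Set (X × Y) :=
  {p | ∃ lam : ℝ, 0 ≤ lam ∧ ∃ w : X, ∃ z : Y, ‖w - u‖ + ‖z - v‖ < ε ∧ p = (lam • w, lam • z)}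

/-- `F` is directionally metrically `γ`-regular at `(xbar, ybar)` in direction `(u, v)`
with modulus `τ`: there are `δ, ε, η > 0` such that `d(x, F⁻¹(y)) ≤ τ d(y, F(x))^γ`
for all `(x,y) ∈ B((xbar,ybar), δ)` with `(x,y) ∈ (xbar,ybar) + cone B((u,v), ε)` and
`d(y,F(x)) ≤ η ‖(x,y)-(xbar,ybar)‖^(1/γ)`.  Distances to sets are extended-real valued
(equal to `+∞` for the empty set). -/
def DirHolderRegular {X Y : Type*} [NormedAddCommGroup X] [NormedSpace ℝ X]
    [NormedAddCommGroup Y] [NormedSpace ℝ Y]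
    (F : X → Set Y) (xbar : X) (ybar : Y) (u : X) (v : Y) (γ τ : ℝ) : Prop :=
  ∃ δ > (0:ℝ), ∃ ε > (0:ℝ), ∃ η > (0:ℝ), ∀ x : X, ∀ y : Y,
    ‖x - xbar‖ + ‖y - ybar‖ < δ →
    (x - xbar, y - ybar) ∈ coneBall2 u v ε →
    EMetric.infEdist y (F x) ≤ ENNReal.ofReal (η * (‖x - xbar‖ + ‖y - ybar‖) ^ (1/γ)) →
    EMetric.infEdist x {x' : X | y ∈ F x'} ≤ ENNReal.ofReal τ * EMetric.infEdist y (F x) ^ γ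

/-- The lower semicontinuous envelope `φ(x,y) = liminf_{x' → x} d(y, F(x'))`. -/
def lscEnv {X Y : Type*} [NormedAddCommGroup X] [NormedSpace ℝ X] [NormedAddCommGroup Y]
    (F : X → Set Y) (x : X) (y : Y) : ℝ≥0∞ :=
  Filter.liminf (fun x' : X => EMetric.infEdist y (F x')) (𝓝 x)

/-- The lsc envelope is below the original function. -/
lemma lscEnv_le_infEdist {X Y : Type*} [NormedAddCommGroup X] [NormedSpace ℝ X]
    [NormedAddCommGroup Y] (F : X → Set Y) (x : X) (y : Y) :
    lscEnv F x y ≤ EMetric.infEdist y (F x) := by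
  apply Filter.liminf_le_of_frequently_le _ (by isBoundedDefault)
  exact Filter.Frequently.filter_mono
    (by simp [Filter.Frequently] :
      ∃ᶠ x' in pure x, EMetric.infEdist y (F x') ≤ EMetric.infEdist y (F x)) (pure_le_nhds x)
/-- Lemma 1 of the paper: `F` is directionally metrically `γ`-regular at
`(xbar,ybar)` in direction `(u,v)` with some modulus `τ > 0` iff there are `τ, δ > 0` with
`d(x, F⁻¹(y)) ≤ τ φ(x,y)^γ` for all `(x,y) ∈ B((xbar,ybar),δ) ∩ ((xbar,ybar) + cone B((u,v),δ))`
with `d(y,F(x)) ≤ δ ‖(x,y) − (xbar,ybar)‖^(1/γ)`. -/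
theorem dirHolderRegular_iff_lscEnv
    {X Y : Type*} [NormedAddCommGroup X] [NormedSpace ℝ X] [CompleteSpace X]
    [NormedAddCommGroup Y] [NormedSpace ℝ Y]
    (F : X → Set Y) (hF : IsClosed {p : X × Y | p.2 ∈ F p.1})
    (xbar : X) (ybar : Y) (hxy : ybar ∈ F xbar) (u : X) (v : Y)
    (γ : ℝ) (hγ0 : 0 < γ) (hγ1 : γ ≤ 1) :
    (∃ τ > (0:ℝ), DirHolderRegular F xbar ybar u v γ τ) ↔
      ∃ τ > (0:ℝ), ∃ δ > (0:ℝ), ∀ x : X, ∀ y : Y,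
        ‖x - xbar‖ + ‖y - ybar‖ < δ →
        (x - xbar, y - ybar) ∈ coneBall2 u v δ →
        EMetric.infEdist y (F x) ≤ ENNReal.ofReal (δ * (‖x - xbar‖ + ‖y - ybar‖) ^ (1/γ)) →
        EMetric.infEdist x {x' : X | y ∈ F x'} ≤
          ENNReal.ofReal τ * lscEnv F x y ^ γ := by
  constructor
  · rintro ⟨τ, hτ, δ, hδ, ε, hε, η, hη, H⟩
    obtain ⟨δ', hδ'0, hδ'1, hδ'2, hδ'3⟩ :
        ∃ δ' : ℝ, 0 < δ' ∧ δ' ≤ δ/2 ∧ δ' ≤ ε/2 ∧ δ' ≤ η * (2:ℝ)⁻¹ ^ (1/γ) / 2 :=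
      ⟨min (δ/2) (min (ε/2) (η * (2:ℝ)⁻¹ ^ (1/γ) / 2)), by positivity, min_le_left _ _,
        (min_le_right _ _).trans (min_le_left _ _),
        (min_le_right _ _).trans (min_le_right _ _)⟩
    refine ⟨τ, hτ, δ', hδ'0, fun x y hball hcone hdist => ?_⟩
    set s : ℝ := ‖x - xbar‖ + ‖y - ybar‖ with hs
    have hs0 : 0 ≤ s := by positivity
    rcases hs0.eq_or_lt with hs0' | hs0'
    · -- the degenerate case (x, y) = (xbar, ybar)
      have hx : x = xbar := by
        have h1 : ‖x - xbar‖ = 0 := by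
          have := norm_nonneg (x - xbar); have := norm_nonneg (y - ybar); linarith [hs0'.symm ▸ hs]
        rwa [norm_eq_zero, sub_eq_zero] at h1
      have hy : y = ybar := by
        have h1 : ‖y - ybar‖ = 0 := by
          have := norm_nonneg (x - xbar); have := norm_nonneg (y - ybar); linarith [hs0'.symm ▸ hs]
        rwa [norm_eq_zero, sub_eq_zero] at h1
      have hmem : x ∈ {x' : X | y ∈ F x'} := by rw [hx, hy]; exact hxy
      exact (le_of_eq (EMetric.infEdist_zero_of_mem hmem)).trans zero_le
    · -- main case: s > 0
      obtain ⟨lam, hlam0, w, z, hwz, heq⟩ := hcone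
      have heq1 : x - xbar = lam • w := congrArg Prod.fst heq
      have heq2 : y - ybar = lam • z := congrArg Prod.snd heq
      have hlam : 0 < lam := by
        rcases hlam0.eq_or_lt with h | h
        · exfalso
          rw [← h, zero_smul] at heq1 heq2
          rw [hs, heq1, heq2, norm_zero, norm_zero] at hs0'
          linarith
        · exact h
      have hφd : lscEnv F x y ≤ ENNReal.ofReal (δ' * s ^ (1/γ)) :=
        (lscEnv_le_infEdist F x y).trans hdist
      have hφtop : lscEnv F x y ≠ ⊤ := (hφd.trans_lt ENNReal.ofReal_lt_top).ne
      have he₀0 : 0 < δ' * s ^ (1/γ) := by positivity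
      set e₀ : ℝ := δ' * s ^ (1/γ) with he₀
      have hr₀0 : 0 < min (s/2) (min (lam * (ε/4)) (δ/4)) := by positivity
      set r₀ : ℝ := min (s/2) (min (lam * (ε/4)) (δ/4)) with hr₀
      -- key estimate
      have key : ∀ e : ℝ, 0 < e → e ≤ e₀ → ∀ r : ℝ, 0 < r → r ≤ r₀ →
          EMetric.infEdist x {x' : X | y ∈ F x'} ≤
            ENNReal.ofReal τ * (lscEnv F x y + ENNReal.ofReal e) ^ γ + ENNReal.ofReal r := by
        intro e he he' r hr hr'
        have hrs : r ≤ s/2 := hr'.trans (min_le_left _ _)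
        have hrlam : r ≤ lam * (ε/4) := hr'.trans ((min_le_right _ _).trans (min_le_left _ _))
        have hrδ : r ≤ δ/4 := hr'.trans ((min_le_right _ _).trans (min_le_right _ _))
        have hlt : Filter.liminf (fun x' : X => EMetric.infEdist y (F x')) (𝓝 x) <
            lscEnv F x y + ENNReal.ofReal e :=
          ENNReal.lt_add_right hφtop (by simp [ENNReal.ofReal_pos.mpr he, ne_of_gt])
        have hfreq : ∃ᶠ x' in 𝓝 x,
            EMetric.infEdist y (F x') < lscEnv F x y + ENNReal.ofReal e :=
          Filter.frequently_lt_of_liminf_lt (by isBoundedDefault) hlt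
        have hev : ∀ᶠ x' in 𝓝 x, dist x' x < r := by
          filter_upwards [Metric.ball_mem_nhds x hr] with x' hx' using hx'
        obtain ⟨x', hfx', hdx'⟩ := (hfreq.and_eventually hev).exists
        have hxx' : ‖x' - x‖ < r := by rwa [dist_eq_norm] at hdx'
        have htri1 : ‖x - xbar‖ ≤ ‖x - x'‖ + ‖x' - xbar‖ := by
          simpa [dist_eq_norm] using dist_triangle x x' xbar
        have htri2 : ‖x' - xbar‖ ≤ ‖x' - x‖ + ‖x - xbar‖ := by
          simpa [dist_eq_norm] using dist_triangle x' x xbar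
        have hnormrev : ‖x - x'‖ = ‖x' - x‖ := norm_sub_rev x x'
        have hs' : s - r ≤ ‖x' - xbar‖ + ‖y - ybar‖ := by
          rw [hs]; linarith
        -- ball condition
        have hb1 : ‖x' - xbar‖ + ‖y - ybar‖ < δ := by
          have hsδ : s < δ' := hball
          rw [hs] at hsδ
          linarith
        -- cone condition
        have hcone' : (x' - xbar, y - ybar) ∈ coneBall2 u v ε := by
          refine ⟨lam, hlam.le, w + lam⁻¹ • (x' - x), z, ?_, ?_⟩
          · have h1 : ‖w + lam⁻¹ • (x' - x) - u‖ ≤ ‖w - u‖ + lam⁻¹ * ‖x' - x‖ := by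
              calc ‖w + lam⁻¹ • (x' - x) - u‖ = ‖(w - u) + lam⁻¹ • (x' - x)‖ := by
                    congr 1; abel
                _ ≤ ‖w - u‖ + ‖lam⁻¹ • (x' - x)‖ := norm_add_le _ _
                _ = ‖w - u‖ + lam⁻¹ * ‖x' - x‖ := by
                    rw [norm_smul, Real.norm_eq_abs, abs_of_nonneg (inv_nonneg.mpr hlam.le)]
            have h2 : lam⁻¹ * ‖x' - x‖ ≤ ε/4 := by
              calc lam⁻¹ * ‖x' - x‖ ≤ lam⁻¹ * (lam * (ε/4)) :=
                    mul_le_mul_of_nonneg_left (hxx'.le.trans hrlam) (inv_nonneg.mpr hlam.le)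
                _ = ε/4 := inv_mul_cancel_left₀ hlam.ne' _
            linarith
          · have hfst : x' - xbar = lam • (w + lam⁻¹ • (x' - x)) := by
              rw [smul_add, smul_smul, mul_inv_cancel₀ hlam.ne', one_smul, ← heq1]; abel
            rw [Prod.mk.injEq]; exact ⟨hfst, heq2⟩
        -- distance condition
        have hcond3 : EMetric.infEdist y (F x') ≤
            ENNReal.ofReal (η * (‖x' - xbar‖ + ‖y - ybar‖) ^ (1/γ)) := by
          refine hfx'.le.trans ?_
          refine le_trans (add_le_add_left hφd _) ?_
          rw [← ENNReal.ofReal_add (by positivity) he.le]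
          apply ENNReal.ofReal_le_ofReal
          have h3 : (2:ℝ)⁻¹ ^ (1/γ) * s ^ (1/γ) = (s/2) ^ (1/γ) := by
            rw [← Real.mul_rpow (by norm_num) hs0]
            congr 1
            ring
          have h4 : (s/2 : ℝ) ^ (1/γ) ≤ (‖x' - xbar‖ + ‖y - ybar‖) ^ (1/γ) :=
            Real.rpow_le_rpow (by linarith) (by linarith) (by positivity)
          have h5 : 2 * δ' * s ^ (1/γ) ≤ η * ((2:ℝ)⁻¹ ^ (1/γ) * s ^ (1/γ)) := by
            have hsp : (0:ℝ) ≤ s ^ (1/γ) := Real.rpow_nonneg hs0 _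
            nlinarith
          calc δ' * s ^ (1/γ) + e ≤ 2 * δ' * s ^ (1/γ) := by rw [he₀] at he'; linarith
            _ ≤ η * ((2:ℝ)⁻¹ ^ (1/γ) * s ^ (1/γ)) := h5
            _ = η * (s/2) ^ (1/γ) := by rw [h3]
            _ ≤ η * (‖x' - xbar‖ + ‖y - ybar‖) ^ (1/γ) :=
                mul_le_mul_of_nonneg_left h4 hη.le
        have hreg := H x' y hb1 hcone' hcond3
        have hreg' : EMetric.infEdist x' {x'' : X | y ∈ F x''} ≤
            ENNReal.ofReal τ * (lscEnv F x y + ENNReal.ofReal e) ^ γ :=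
          hreg.trans (mul_le_mul_right (ENNReal.rpow_le_rpow hfx'.le hγ0.le) _)
        calc EMetric.infEdist x {x'' : X | y ∈ F x''}
            ≤ EMetric.infEdist x' {x'' : X | y ∈ F x''} + edist x x' :=
              EMetric.infEdist_le_infEdist_add_edist
          _ ≤ ENNReal.ofReal τ * (lscEnv F x y + ENNReal.ofReal e) ^ γ + ENNReal.ofReal r := by
              refine add_le_add hreg' ?_
              rw [edist_dist]
              exact ENNReal.ofReal_le_ofReal (by rw [dist_comm]; exact hdx'.le)
      -- let r → 0
      have step1 : ∀ e : ℝ, 0 < e → e ≤ e₀ →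
          EMetric.infEdist x {x' : X | y ∈ F x'} ≤
            ENNReal.ofReal τ * (lscEnv F x y + ENNReal.ofReal e) ^ γ := by
        intro e he he'
        apply ENNReal.le_of_forall_pos_le_add
        intro ε' hε' _
        have hr0 : 0 < min (ε' : ℝ) r₀ := lt_min (by exact_mod_cast hε') hr₀0
        refine (key e he he' _ hr0 (min_le_right _ _)).trans ?_
        exact add_le_add_right ((ENNReal.ofReal_le_ofReal (min_le_left _ _)).trans
          (le_of_eq ENNReal.ofReal_coe_nnreal)) _
      -- let e → 0
      have h1 : Tendsto (fun n : ℕ => e₀ / ((n : ℝ) + 1)) atTop (𝓝 0) := by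
        have h := (tendsto_const_div_atTop_nhds_zero_nat e₀).comp (tendsto_add_atTop_nat 1)
        exact h.congr fun n => by simp [Function.comp]
      have h2 : Tendsto (fun n : ℕ => lscEnv F x y + ENNReal.ofReal (e₀ / ((n : ℝ) + 1)))
          atTop (𝓝 (lscEnv F x y)) := by
        have := ENNReal.tendsto_ofReal h1
        rw [ENNReal.ofReal_zero] at this
        simpa using Filter.Tendsto.const_add (lscEnv F x y) this
      have h3 : Tendsto
          (fun n : ℕ => ENNReal.ofReal τ *
            (lscEnv F x y + ENNReal.ofReal (e₀ / ((n : ℝ) + 1))) ^ γ)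
          atTop (𝓝 (ENNReal.ofReal τ * lscEnv F x y ^ γ)) :=
        ENNReal.Tendsto.const_mul ((ENNReal.continuous_rpow_const.tendsto _).comp h2)
          (Or.inr ENNReal.ofReal_ne_top)
      refine ge_of_tendsto' h3 fun n => step1 _ ?_ ?_
      · positivity
      · exact div_le_self he₀0.le (by push_cast; linarith [Nat.cast_nonneg (α := ℝ) n])
  · rintro ⟨τ, hτ, δ, hδ, H⟩
    refine ⟨τ, hτ, δ, hδ, δ, hδ, δ, hδ, fun x y h1 h2 h3 => ?_⟩
    exact (H x y h1 h2 h3).trans (mul_le_mul_right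
      (ENNReal.rpow_le_rpow (lscEnv_le_infEdist F x y) hγ0.le) _)


end
end

section
/- Let X be a normed space, u ∈ X, x̄ ∈ X, and let {xₙ} be a sequence in X with xₙ →_u x̄. Then for any sequence of nonnegative reals {δₙ} decreasing to 0 and any sequence {zₙ} ⊆ X with ‖zₙ − xₙ‖ ≤ δₙ ‖xₙ − x̄‖ for all n, one has zₙ →_u x̄. -/
open Filter Metric Set Topology

/-- Directional convergence of a sequence: `s n →_u xbar` means `s n → xbar` and, when
`u ≠ 0`, for every `ε > 0` eventually either `s n = xbar` or the normalized difference
`(s n - xbar)/‖s n - xbar‖` is within `ε` of `u/‖u‖`. -/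
def SeqDirTendsto {X : Type*} [NormedAddCommGroup X] [NormedSpace ℝ X]
    (s : ℕ → X) (u xbar : X) : Prop :=
  Tendsto s atTop (𝓝 xbar) ∧
    (u ≠ 0 → ∀ ε > (0:ℝ), ∀ᶠ n in atTop,
      s n = xbar ∨ ‖(‖s n - xbar‖)⁻¹ • (s n - xbar) - (‖u‖)⁻¹ • u‖ < ε)


lemma aux_norm_dir {X : Type*} [NormedAddCommGroup X] [NormedSpace ℝ X]
    (a b : X) (ha : a ≠ 0) (hb : b ≠ 0) (d : ℝ) (hd : d ≤ 1/2)
    (h : ‖b - a‖ ≤ d * ‖a‖) :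
    ‖(‖b‖)⁻¹ • b - (‖a‖)⁻¹ • a‖ ≤ 4 * d := by
  have hna : (0:ℝ) < ‖a‖ := norm_pos_iff.mpr ha
  have hnb : (0:ℝ) < ‖b‖ := norm_pos_iff.mpr hb
  have hb2 : ‖a‖ / 2 ≤ ‖b‖ := by
    have h1 : ‖a‖ - ‖b‖ ≤ ‖a - b‖ := norm_sub_norm_le a b
    have h2 : ‖a - b‖ = ‖b - a‖ := norm_sub_rev a b
    nlinarith
  have key : (‖b‖)⁻¹ • b - (‖a‖)⁻¹ • a
      = (‖b‖)⁻¹ • (b - a) + ((‖b‖)⁻¹ - (‖a‖)⁻¹) • a := by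
    rw [smul_sub, sub_smul]; abel
  have h1 : ‖(‖b‖)⁻¹ • (b - a)‖ = ‖b - a‖ / ‖b‖ := by
    rw [norm_smul, norm_inv, norm_norm]; ring
  have h2 : ‖((‖b‖)⁻¹ - (‖a‖)⁻¹) • a‖ ≤ ‖b - a‖ / ‖b‖ := by
    rw [norm_smul, Real.norm_eq_abs]
    have heq : (‖b‖)⁻¹ - (‖a‖)⁻¹ = (‖a‖ - ‖b‖) / (‖a‖ * ‖b‖) := by
      field_simp
    rw [heq, abs_div, abs_of_pos (mul_pos hna hnb)]
    have habs : |‖a‖ - ‖b‖| ≤ ‖b - a‖ := by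
      rw [← norm_sub_rev]; exact abs_norm_sub_norm_le a b
    rw [div_mul_eq_mul_div, mul_comm]
    rw [div_le_div_iff₀ (by positivity) hnb]
    calc ‖a‖ * |‖a‖ - ‖b‖| * ‖b‖ ≤ ‖a‖ * ‖b - a‖ * ‖b‖ := by
          have := mul_le_mul_of_nonneg_left habs hna.le
          nlinarith
      _ = ‖b - a‖ * (‖a‖ * ‖b‖) := by ring
  have hd0 : 0 ≤ d := by
    by_contra hneg
    push_neg at hneg
    have : ‖b - a‖ < 0 := lt_of_le_of_lt h (by nlinarith)
    exact absurd this (not_lt.mpr (norm_nonneg _))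
  calc ‖(‖b‖)⁻¹ • b - (‖a‖)⁻¹ • a‖
      ≤ ‖(‖b‖)⁻¹ • (b - a)‖ + ‖((‖b‖)⁻¹ - (‖a‖)⁻¹) • a‖ := by
        rw [key]; exact norm_add_le _ _
    _ ≤ ‖b - a‖ / ‖b‖ + ‖b - a‖ / ‖b‖ := by rw [h1]; linarith
    _ = 2 * ‖b - a‖ / ‖b‖ := by ring
    _ ≤ 2 * (d * ‖a‖) / (‖a‖ / 2) := by
        apply div_le_div₀ (by positivity) (by linarith) (by linarith) hb2
    _ = 4 * d := by field_simp; ring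

/-- Lemma 2 of the paper: if `xₙ →_u x̄`, `δₙ ≥ 0` decreases to `0`
and `‖zₙ − xₙ‖ ≤ δₙ ‖xₙ − x̄‖` for all `n`, then `zₙ →_u x̄`. -/
theorem seqDirTendsto_of_perturbation
    {X : Type*} [NormedAddCommGroup X] [NormedSpace ℝ X]
    (s z : ℕ → X) (u xbar : X) (δ : ℕ → ℝ)
    (hs : SeqDirTendsto s u xbar)
    (hδ0 : ∀ n, 0 ≤ δ n) (hδanti : Antitone δ) (hδlim : Tendsto δ atTop (𝓝 0))
    (hz : ∀ n, ‖z n - s n‖ ≤ δ n * ‖s n - xbar‖) :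
    SeqDirTendsto z u xbar := by
  have hz0 : ∀ n, s n = xbar → z n = xbar := by
    intro n hn
    have := hz n
    rw [hn, sub_self, norm_zero, mul_zero] at this
    exact sub_eq_zero.mp (norm_le_zero_iff.mp this)
  constructor
  · -- convergence
    rw [tendsto_iff_norm_sub_tendsto_zero]
    apply squeeze_zero (fun n => norm_nonneg _) (g := fun n => (δ 0 + 1) * ‖s n - xbar‖)
    · intro n
      calc ‖z n - xbar‖ ≤ ‖z n - s n‖ + ‖s n - xbar‖ := by
            have := norm_add_le (z n - s n) (s n - xbar)
            simpa using this
        _ ≤ δ n * ‖s n - xbar‖ + ‖s n - xbar‖ := by linarith [hz n]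
        _ ≤ (δ 0 + 1) * ‖s n - xbar‖ := by
            have := hδanti (Nat.zero_le n)
            nlinarith [norm_nonneg (s n - xbar)]
    · have hsn : Tendsto (fun n => ‖s n - xbar‖) atTop (𝓝 0) :=
        tendsto_iff_norm_sub_tendsto_zero.mp hs.1
      simpa using hsn.const_mul (δ 0 + 1)
  · intro hu ε hε
    have h1 := hs.2 hu (ε/2) (by linarith)
    have h2 : ∀ᶠ n in atTop, δ n < min (1/2) (ε/8) := by
      apply hδlim.eventually (gt_mem_nhds ?_)
      positivity
    filter_upwards [h1, h2] with n hn hδn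
    by_cases hzn : z n = xbar
    · left; exact hzn
    right
    by_cases hsn : s n = xbar
    · exact absurd (hz0 n hsn) hzn
    rcases hn with hn | hn
    · exact absurd hn hsn
    have ha : s n - xbar ≠ 0 := sub_ne_zero.mpr hsn
    have hb : z n - xbar ≠ 0 := sub_ne_zero.mpr hzn
    have hdiff : ‖(z n - xbar) - (s n - xbar)‖ ≤ δ n * ‖s n - xbar‖ := by
      simpa using hz n
    have hmain := aux_norm_dir (s n - xbar) (z n - xbar) ha hb (δ n)
      (le_of_lt (lt_of_lt_of_le hδn (min_le_left _ _))) hdiff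
    have h4d : 4 * δ n < ε / 2 := by
      have := lt_of_lt_of_le hδn (min_le_right _ _)
      linarith
    calc ‖(‖z n - xbar‖)⁻¹ • (z n - xbar) - (‖u‖)⁻¹ • u‖
        ≤ ‖(‖z n - xbar‖)⁻¹ • (z n - xbar) - (‖s n - xbar‖)⁻¹ • (s n - xbar)‖
          + ‖(‖s n - xbar‖)⁻¹ • (s n - xbar) - (‖u‖)⁻¹ • u‖ := norm_sub_le_norm_sub_add_norm_sub _ _ _
      _ < ε/2 + ε/2 := by
          apply add_lt_add_of_le_of_lt _ hn
          linarith
      _ = ε := by ring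
end

section
/- Let X be a normed space, {xₙ} ⊆ X a sequence, u ∈ X and x̄ ∈ X. The following are equivalent: (C₁) xₙ →_u x̄; (C₂) xₙ → x̄ and there is a sequence of nonnegative reals {δₙ} → 0 such that xₙ ∈ x̄ + cone B(u, δₙ) for all n ∈ ℕ. -/
open Filter Metric Set Topology

/-- The conic hull `⋃ λ ≥ 0, λ • B(u, ε)` of the open ball of radius `ε` around `u`. -/
def coneBall {X : Type*} [NormedAddCommGroup X] [NormedSpace ℝ X] (u : X) (ε : ℝ) :
    Set X :=
  {x | ∃ lam : ℝ, 0 ≤ lam ∧ ∃ w : X, ‖w - u‖ < ε ∧ x = lam • w}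

lemma norm_normalize_sub_normalize_le {X : Type*} [NormedAddCommGroup X] [NormedSpace ℝ X]
    (w u : X) (hw : w ≠ 0) (hu : u ≠ 0) :
    ‖(‖w‖)⁻¹ • w - (‖u‖)⁻¹ • u‖ ≤ 2 * ‖w - u‖ / ‖u‖ := by
  have hwn : ‖w‖ ≠ 0 := norm_ne_zero_iff.mpr hw
  have hun : ‖u‖ ≠ 0 := norm_ne_zero_iff.mpr hu
  have hup : (0:ℝ) < ‖u‖ := norm_pos_iff.mpr hu
  have key : (‖w‖)⁻¹ • w - (‖u‖)⁻¹ • u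
      = (‖u‖)⁻¹ • (w - u) + ((‖w‖)⁻¹ - (‖u‖)⁻¹) • w := by
    module
  have h3 : |‖u‖ - ‖w‖| ≤ ‖w - u‖ := by
    rw [norm_sub_rev]; exact abs_norm_sub_norm_le u w
  have h2 : |(‖w‖)⁻¹ - (‖u‖)⁻¹| * ‖w‖ ≤ ‖w - u‖ / ‖u‖ := by
    have e : (‖w‖)⁻¹ - (‖u‖)⁻¹ = (‖u‖ - ‖w‖) / (‖w‖ * ‖u‖) := by
      field_simp
    have e2 : |(‖w‖)⁻¹ - (‖u‖)⁻¹| * ‖w‖ = |‖u‖ - ‖w‖| / ‖u‖ := by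
      rw [e, abs_div, abs_of_nonneg (mul_nonneg (norm_nonneg w) (norm_nonneg u))]
      field_simp
    rw [e2]
    gcongr
  calc ‖(‖w‖)⁻¹ • w - (‖u‖)⁻¹ • u‖
      = ‖(‖u‖)⁻¹ • (w - u) + ((‖w‖)⁻¹ - (‖u‖)⁻¹) • w‖ := by rw [key]
    _ ≤ ‖(‖u‖)⁻¹ • (w - u)‖ + ‖((‖w‖)⁻¹ - (‖u‖)⁻¹) • w‖ := norm_add_le _ _
    _ = (‖u‖)⁻¹ * ‖w - u‖ + |(‖w‖)⁻¹ - (‖u‖)⁻¹| * ‖w‖ := by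
        rw [norm_smul, norm_smul, Real.norm_eq_abs, Real.norm_eq_abs,
          abs_of_nonneg (inv_nonneg.mpr (norm_nonneg u))]
    _ ≤ ‖w - u‖ / ‖u‖ + ‖w - u‖ / ‖u‖ :=
        add_le_add (le_of_eq (inv_mul_eq_div _ _)) h2
    _ = 2 * ‖w - u‖ / ‖u‖ := by ring

/-- `xₙ →_u x̄` (C₁) iff `xₙ → x̄` and there is a sequence of nonnegative
reals `δₙ → 0` with `xₙ ∈ x̄ + cone B(u, δₙ)` for all `n` (C₂). -/
theorem seqDirTendsto_iff_coneBall
    {X : Type*} [NormedAddCommGroup X] [NormedSpace ℝ X]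
    (s : ℕ → X) (u xbar : X) :
    SeqDirTendsto s u xbar ↔
      (Tendsto s atTop (𝓝 xbar) ∧
        ∃ δ : ℕ → ℝ, (∀ n, 0 ≤ δ n) ∧ Tendsto δ atTop (𝓝 0) ∧
          ∀ n, s n - xbar ∈ coneBall u (δ n)) := by
  classical
  constructor
  · rintro ⟨htend, hdir⟩
    refine ⟨htend, ?_⟩
    by_cases hu : u = 0
    · -- when u = 0, coneBall 0 δ = X for δ > 0
      refine ⟨fun n => ‖s n - xbar‖ + 1/(n+1), fun n => by positivity, ?_, ?_⟩
      · have h1 : Tendsto (fun n => ‖s n - xbar‖) atTop (𝓝 0) := by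
          have := htend.sub_const xbar
          rw [sub_self] at this
          simpa using this.norm
        simpa using h1.add tendsto_one_div_add_atTop_nhds_zero_nat
      · intro n
        refine ⟨1, zero_le_one, s n - xbar, ?_, (one_smul ℝ _).symm⟩
        rw [hu, sub_zero]
        have : (0:ℝ) < 1/(n+1) := by positivity
        linarith
    · -- u ≠ 0
      set T : ℕ → ℝ := fun n => if s n = xbar then 0
        else ‖(‖s n - xbar‖)⁻¹ • (s n - xbar) - (‖u‖)⁻¹ • u‖ with hT
      have hTnn : ∀ n, 0 ≤ T n := by
        intro n; simp only [hT]; split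
        exacts [le_rfl, norm_nonneg _]
      have hT0 : Tendsto T atTop (𝓝 0) := by
        rw [Metric.tendsto_atTop]
        intro ε hε
        obtain ⟨N, hN⟩ := (hdir hu ε hε).exists_forall_of_atTop
        refine ⟨N, fun n hn => ?_⟩
        rw [Real.dist_eq, sub_zero, abs_of_nonneg (hTnn n)]
        rcases hN n hn with h | h
        · simpa [hT, h] using hε
        · by_cases hsn : s n = xbar
          · simpa [hT, hsn] using hε
          · simpa [hT, hsn] using h
      refine ⟨fun n => ‖u‖ * T n + 1/(n+1),
        fun n => by have := hTnn n; positivity, ?_, ?_⟩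
      · have h1 : Tendsto (fun n => ‖u‖ * T n) atTop (𝓝 0) := by
          have h1 := hT0.const_mul ‖u‖
          rwa [mul_zero] at h1
        simpa using h1.add tendsto_one_div_add_atTop_nhds_zero_nat
      · intro n
        have hpos : (0:ℝ) < 1/(n+1) := by positivity
        by_cases h : s n = xbar
        · refine ⟨0, le_rfl, u, ?_, by rw [h, sub_self, zero_smul]⟩
          have hTz : T n = 0 := by simp [hT, h]
          simp only [sub_self, norm_zero, hTz, mul_zero, zero_add]
          exact hpos
        · have hd : s n - xbar ≠ 0 := sub_ne_zero_of_ne h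
          have hdn : ‖s n - xbar‖ ≠ 0 := norm_ne_zero_iff.mpr hd
          have hun : ‖u‖ ≠ 0 := norm_ne_zero_iff.mpr hu
          refine ⟨‖s n - xbar‖ / ‖u‖, by positivity,
            (‖u‖ / ‖s n - xbar‖) • (s n - xbar), ?_, ?_⟩
          · have hw : (‖u‖ / ‖s n - xbar‖) • (s n - xbar) - u
                = ‖u‖ • ((‖s n - xbar‖)⁻¹ • (s n - xbar) - (‖u‖)⁻¹ • u) := by
              match_scalars <;> field_simp
            rw [hw, norm_smul, Real.norm_eq_abs, abs_of_nonneg (norm_nonneg u)]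
            have hTn : T n = ‖(‖s n - xbar‖)⁻¹ • (s n - xbar) - (‖u‖)⁻¹ • u‖ := by
              simp [hT, h]
            rw [← hTn]
            linarith
          · rw [smul_smul, div_mul_div_comm, mul_comm ‖u‖ ‖s n - xbar‖,
              div_self (by positivity), one_smul]
  · rintro ⟨htend, δ, hδnn, hδ0, hmem⟩
    refine ⟨htend, fun hu ε hε => ?_⟩
    have hun : (0:ℝ) < ‖u‖ := norm_pos_iff.mpr hu
    have hev : ∀ᶠ n in atTop, δ n < ε * ‖u‖ / 2 := by
      have : (0:ℝ) < ε * ‖u‖ / 2 := by positivity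
      exact hδ0.eventually (eventually_lt_nhds this) |>.mono (fun n h => h)
    filter_upwards [hev] with n hn
    by_cases h : s n = xbar
    · exact Or.inl h
    · right
      obtain ⟨lam, hlam, w, hwu, hEq⟩ := hmem n
      have hd : s n - xbar ≠ 0 := sub_ne_zero_of_ne h
      have hlam' : lam ≠ 0 := by
        rintro rfl; rw [zero_smul] at hEq; exact hd hEq
      have hlampos : 0 < lam := lt_of_le_of_ne hlam (Ne.symm hlam')
      have hw : w ≠ 0 := by
        rintro rfl; rw [smul_zero] at hEq; exact hd hEq
      have hwn : ‖w‖ ≠ 0 := norm_ne_zero_iff.mpr hw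
      have hnorm : (‖s n - xbar‖)⁻¹ • (s n - xbar) = (‖w‖)⁻¹ • w := by
        rw [hEq, norm_smul, Real.norm_eq_abs, abs_of_pos hlampos, smul_smul]
        congr 1
        field_simp
      rw [hnorm]
      calc ‖(‖w‖)⁻¹ • w - (‖u‖)⁻¹ • u‖ ≤ 2 * ‖w - u‖ / ‖u‖ :=
            norm_normalize_sub_normalize_le w u hw hu
        _ < 2 * (ε * ‖u‖ / 2) / ‖u‖ := by
            gcongr
            exact hwu.trans hn
        _ = ε := by field_simp
end

section
/- Let F : ℝ² → ℝ be defined by F(x) = (x₁ − x₂)³ for x = (x₁,x₂), with ℝ² equipped with the Euclidean norm. Then: (a) for every x ∈ ℝ² and y ∈ ℝ, F⁻¹(y) = {(t + y^{1/3}, t) : t ∈ ℝ} and d(x, F⁻¹(y)) = |x₁ − x₂ − y^{1/3}|/√2 ≤ 2^{1/6} |y − F(x)|^{1/3}, so F is metrically 1/3-regular at (0,0) (in direction (0,0)); (b) nevertheless, for every x = (x₁,x₁) ∈ ℝ² and every y ∈ ℝ with y ≠ 0, the local slope |∇φ^{1/3}(·,y)|(x) = 0, where φ(x,y) = |y − F(x)|.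 In particular the local-slope condition is not necessary for directional metric γ-regularity when γ ∈ (0,1). -/
open Filter Metric Set Topology
open scoped ENNReal NNReal Classical

noncomputable section

/-- The local slope `|∇f|(x)`: equal to `+∞` if `f x = +∞`, to `0` if `x` is a local
minimum of `f`, and otherwise to `limsup_{z → x, z ≠ x} (f(x) − f(z)) / d(x,z)`. -/
def localSlope {X : Type*} [PseudoEMetricSpace X] (f : X → ℝ≥0∞) (x : X) : ℝ≥0∞ :=
  if f x = ⊤ then ⊤
  else if ∀ᶠ z in 𝓝 x, f x ≤ f z then 0
  else Filter.limsup (fun z : X => (f x - f z) / edist x z) (𝓝[≠] x)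

/-- The map `F(x) = (x₁ − x₂)³` on `ℝ²` with the Euclidean norm. -/
def Fcub : EuclideanSpace ℝ (Fin 2) → ℝ := fun x => (x 0 - x 1) ^ 3

lemma dist_eq2 (x p : EuclideanSpace ℝ (Fin 2)) :
    dist x p = Real.sqrt ((x 0 - p 0)^2 + (x 1 - p 1)^2) := by
  rw [EuclideanSpace.dist_eq, Fin.sum_univ_two]
  simp [Real.dist_eq, sq_abs]

lemma preim (y c : ℝ) (h : c ^ 3 = y) :
    Fcub ⁻¹' {y} = {p : EuclideanSpace ℝ (Fin 2) | ∃ t : ℝ, p 0 = t + c ∧ p 1 = t} := by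
  ext p
  simp only [Fcub, mem_preimage, mem_singleton_iff, mem_setOf_eq]
  constructor
  · intro hp
    refine ⟨p 1, ?_, rfl⟩
    have h3 : (p 0 - p 1) ^ 3 = c ^ 3 := by rw [hp, h]
    have hodd : Odd 3 := ⟨1, by norm_num⟩
    have h2 : p 0 - p 1 = c := (hodd.strictMono_pow (R := ℝ)).injective h3
    linarith
  · rintro ⟨t, h0, h1⟩
    rw [h0, h1]; ring_nf; linarith [h]

lemma infdist_eq (x : EuclideanSpace ℝ (Fin 2)) (y c : ℝ) (h : c ^ 3 = y) :
    Metric.infDist x (Fcub ⁻¹' {y}) = |x 0 - x 1 - c| / Real.sqrt 2 := by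
  rw [preim y c h]
  set S : Set (EuclideanSpace ℝ (Fin 2)) := {p | ∃ t : ℝ, p 0 = t + c ∧ p 1 = t}
  have hS : S.Nonempty := ⟨(WithLp.equiv 2 (Fin 2 → ℝ)).symm ![0 + c, 0], ⟨0, rfl, rfl⟩⟩
  apply le_antisymm
  · set t := (x 0 + x 1 - c) / 2 with ht
    have hp : ((WithLp.equiv 2 (Fin 2 → ℝ)).symm ![t + c, t]) ∈ S := ⟨t, rfl, rfl⟩
    refine (infDist_le_dist_of_mem hp).trans_eq ?_
    rw [dist_eq2]
    have e0 : ((WithLp.equiv 2 (Fin 2 → ℝ)).symm ![t + c, t] : EuclideanSpace ℝ (Fin 2)) 0 = t + c := rfl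
    have e1 : ((WithLp.equiv 2 (Fin 2 → ℝ)).symm ![t + c, t] : EuclideanSpace ℝ (Fin 2)) 1 = t := rfl
    rw [e0, e1]
    have he : (x 0 - (t + c)) ^ 2 + (x 1 - t) ^ 2 = (x 0 - x 1 - c)^2 / 2 := by
      rw [ht]; ring
    rw [he, Real.sqrt_div (sq_nonneg _), Real.sqrt_sq_eq_abs]
  · refine le_of_not_gt fun hlt => ?_
    obtain ⟨p, ⟨t, h0, h1⟩, hd⟩ := (infDist_lt_iff hS).mp hlt
    rw [dist_eq2, h0, h1] at hd
    have h2 : |x 0 - x 1 - c| / Real.sqrt 2 ≤ Real.sqrt ((x 0 - (t+c))^2 + (x 1 - t)^2) := by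
      rw [div_le_iff₀ (by positivity), ← Real.sqrt_sq_eq_abs,
        ← Real.sqrt_mul (by positivity) 2]
      apply Real.sqrt_le_sqrt
      nlinarith [sq_nonneg ((x 0 - (t+c)) + (x 1 - t))]
    linarith

lemma cube_abs_bound (u c : ℝ) : |u - c| ^ 3 ≤ 4 * |c^3 - u^3| := by
  rcases le_total c u with hcu | hcu
  · have h1 : |u - c| = u - c := abs_of_nonneg (by linarith)
    have h2 : u^3 - c^3 ≤ |c^3 - u^3| := by rw [abs_sub_comm]; exact le_abs_self _
    rw [h1]
    nlinarith [mul_nonneg (sub_nonneg.mpr hcu) (sq_nonneg (u + c))]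
  · have h1 : |u - c| = c - u := by rw [abs_sub_comm]; exact abs_of_nonneg (by linarith)
    have h2 : c^3 - u^3 ≤ |c^3 - u^3| := le_abs_self _
    rw [h1]
    nlinarith [mul_nonneg (sub_nonneg.mpr hcu) (sq_nonneg (u + c))]

lemma key_ineq (u c : ℝ) : |u - c| / Real.sqrt 2 ≤ (2:ℝ) ^ ((1:ℝ)/6) * |c^3 - u^3| ^ ((1:ℝ)/3) := by
  set A := |u - c|
  set B := |c^3 - u^3|
  have hA : 0 ≤ A := abs_nonneg _
  have hB : 0 ≤ B := abs_nonneg _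
  have h1 : A ≤ (4 * B) ^ ((1:ℝ)/3) := by
    have : A = (A ^ 3) ^ ((1:ℝ)/3) := by
      rw [← Real.rpow_natCast A 3, ← Real.rpow_mul hA]
      norm_num
    rw [this]
    exact Real.rpow_le_rpow (by positivity) (cube_abs_bound u c) (by norm_num)
  have h2 : (4 * B) ^ ((1:ℝ)/3) = (2:ℝ) ^ ((2:ℝ)/3) * B ^ ((1:ℝ)/3) := by
    rw [Real.mul_rpow (by norm_num) hB]
    congr 1
    rw [show (4:ℝ) = 2 ^ (2:ℝ) by norm_num [Real.rpow_natCast], ← Real.rpow_mul (by norm_num)]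
    norm_num
  have hs : Real.sqrt 2 = (2:ℝ) ^ ((1:ℝ)/2) := by
    rw [Real.sqrt_eq_rpow]
  rw [div_le_iff₀ (by positivity)]
  calc A ≤ (2:ℝ) ^ ((2:ℝ)/3) * B ^ ((1:ℝ)/3) := by rw [← h2]; exact h1
    _ = (2:ℝ) ^ ((1:ℝ)/6) * B ^ ((1:ℝ)/3) * Real.sqrt 2 := by
        rw [hs, mul_right_comm, ← Real.rpow_add (by norm_num)]
        norm_num

lemma cuberoot_exists (y : ℝ) : ∃ c : ℝ, c ^ 3 = y := by
  rcases le_or_gt 0 y with hy | hy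
  · refine ⟨y ^ ((1:ℝ)/3), ?_⟩
    rw [← Real.rpow_natCast (y ^ ((1:ℝ)/3)) 3, ← Real.rpow_mul hy]
    norm_num
  · refine ⟨-((-y) ^ ((1:ℝ)/3)), ?_⟩
    have : ((-y) ^ ((1:ℝ)/3)) ^ (3:ℕ) = -y := by
      rw [← Real.rpow_natCast ((-y) ^ ((1:ℝ)/3)) 3, ← Real.rpow_mul (by linarith)]
      norm_num
    rw [neg_pow]
    rw [this]; norm_num

lemma coord_le (x p : EuclideanSpace ℝ (Fin 2)) :
    |x 0 - p 0| ≤ dist x p ∧ |x 1 - p 1| ≤ dist x p := by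
  rw [dist_eq2]
  constructor
  · rw [← Real.sqrt_sq_eq_abs]; exact Real.sqrt_le_sqrt (by nlinarith [sq_nonneg (x 1 - p 1)])
  · rw [← Real.sqrt_sq_eq_abs]; exact Real.sqrt_le_sqrt (by nlinarith [sq_nonneg (x 0 - p 0)])

/-- cube-root difference bound: for `0 < b ≤ s` with `r ≥ b`, `s^{1/3} - r^{1/3} ≤ (s-r)/b^{2/3}`. -/

lemma rpow_third_diff_le {s r b : ℝ} (hb : 0 < b) (hbr : b ≤ r) (hrs : r ≤ s) :
    s ^ ((1:ℝ)/3) - r ^ ((1:ℝ)/3) ≤ (s - r) / b ^ ((2:ℝ)/3) := by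
  have hr : 0 < r := lt_of_lt_of_le hb hbr
  have hs : 0 < s := lt_of_lt_of_le hr hrs
  set A := s ^ ((1:ℝ)/3) with hA
  set B := r ^ ((1:ℝ)/3) with hB
  have hA0 : 0 ≤ A := Real.rpow_nonneg hs.le _
  have hB0 : 0 ≤ B := Real.rpow_nonneg hr.le _
  have hAB : B ≤ A := Real.rpow_le_rpow hr.le hrs (by norm_num)
  have hA3 : A ^ 3 = s := by
    rw [hA, ← Real.rpow_natCast (s ^ ((1:ℝ)/3)) 3, ← Real.rpow_mul hs.le]; norm_num
  have hB3 : B ^ 3 = r := by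
    rw [hB, ← Real.rpow_natCast (r ^ ((1:ℝ)/3)) 3, ← Real.rpow_mul hr.le]; norm_num
  have hB2 : B ^ 2 = r ^ ((2:ℝ)/3) := by
    rw [hB, ← Real.rpow_natCast (r ^ ((1:ℝ)/3)) 2, ← Real.rpow_mul hr.le]; norm_num
  have step1 : A - B ≤ (s - r) / r ^ ((2:ℝ)/3) := by
    rw [le_div_iff₀ (by positivity), ← hB2, ← hA3, ← hB3]
    nlinarith [mul_nonneg (sub_nonneg.mpr hAB) (mul_nonneg hA0 hB0),
      mul_nonneg (sub_nonneg.mpr hAB) (sq_nonneg (A - B))]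
  refine step1.trans ?_
  apply div_le_div_of_nonneg_left (by linarith) (by positivity)
  exact Real.rpow_le_rpow hb.le hbr (by norm_num)

lemma slope_zero (a y : ℝ) (hy : y ≠ 0) :
    localSlope
      (fun p : EuclideanSpace ℝ (Fin 2) => ENNReal.ofReal |y - Fcub p| ^ ((1:ℝ)/3))
      (WithLp.toLp 2 (fun _ => a)) = 0 := by
  set x : EuclideanSpace ℝ (Fin 2) := WithLp.toLp 2 (fun _ => a) with hxdef
  set f : EuclideanSpace ℝ (Fin 2) → ℝ≥0∞ :=
    fun p => ENNReal.ofReal |y - Fcub p| ^ ((1:ℝ)/3) with hfdef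
  have htop : f x ≠ ⊤ := ENNReal.rpow_ne_top_of_nonneg (by norm_num) ENNReal.ofReal_ne_top
  rw [localSlope, if_neg htop]
  have hsy : (0:ℝ) < |y| := abs_pos.mpr hy
  set s := |y| with hsdef
  set M : ℝ := ((s/2) ^ ((2:ℝ)/3))⁻¹ with hM
  have hM0 : 0 ≤ M := by positivity
  set K : ℝ := 8 * M with hK
  set ρ : ℝ := (s/2) ^ ((1:ℝ)/3) / 2 with hρ
  have hρ0 : 0 < ρ := by positivity
  have hcube : ((s/2) ^ ((1:ℝ)/3)) ^ 3 = s / 2 := by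
    rw [← Real.rpow_natCast ((s/2) ^ ((1:ℝ)/3)) 3, ← Real.rpow_mul (by positivity)]
    norm_num
  have hρ3 : (2 * ρ) ^ 3 = s / 2 := by
    rw [hρ]; rw [show (2 * ((s/2) ^ ((1:ℝ)/3) / 2)) ^ 3 = ((s/2) ^ ((1:ℝ)/3)) ^ 3 by ring, hcube]
  split_ifs with hmin
  · rfl
  · apply Tendsto.limsup_eq
    have hup : Tendsto (fun z : EuclideanSpace ℝ (Fin 2) => ENNReal.ofReal (K * dist x z ^ 2))
        (𝓝[≠] x) (𝓝 0) := by
      have h1 : Tendsto (fun z : EuclideanSpace ℝ (Fin 2) => K * dist x z ^ 2) (𝓝 x) (𝓝 0) := by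
        have hcont : Continuous fun z : EuclideanSpace ℝ (Fin 2) => dist x z :=
          continuous_const.dist continuous_id
        have hd : Tendsto (fun z : EuclideanSpace ℝ (Fin 2) => dist x z) (𝓝 x) (𝓝 0) := by
          simpa using hcont.tendsto x
        have := (hd.pow 2).const_mul K
        simpa using this
      have h2 := ENNReal.tendsto_ofReal h1
      simpa using h2.mono_left nhdsWithin_le_nhds
    apply tendsto_of_tendsto_of_tendsto_of_le_of_le' tendsto_const_nhds hup
    · exact Eventually.of_forall fun z => zero_le
    · have hball : {z : EuclideanSpace ℝ (Fin 2) | dist x z < ρ} ∈ 𝓝[≠] x := by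
        apply nhdsWithin_le_nhds
        have : Metric.ball x ρ ∈ 𝓝 x := Metric.ball_mem_nhds x hρ0
        filter_upwards [this] with z hz
        rw [Metric.mem_ball, dist_comm] at hz
        exact hz
      filter_upwards [hball, self_mem_nhdsWithin] with z hzρ hzx
      have hzρ' : dist x z < ρ := hzρ
      have hzx' : z ≠ x := hzx
      set d := dist x z with hd
      have hd0 : (0:ℝ) < d := dist_pos.mpr (fun h => hzx' h.symm)
      set u := z 0 - z 1 with hu
      have hx0 : x 0 = a := rfl
      have hx1 : x 1 = a := rfl
      have hcoord := coord_le x z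
      have huD : |u| ≤ 2 * d := by
        have h1 : u = (x 1 - z 1) - (x 0 - z 0) := by simp only [hu, hx0, hx1]; ring
        rw [h1]
        calc |(x 1 - z 1) - (x 0 - z 0)| ≤ |x 1 - z 1| + |x 0 - z 0| := abs_sub _ _
          _ ≤ 2 * d := by linarith [hcoord.1, hcoord.2]
      have hu3 : |u| ^ 3 ≤ 8 * d ^ 3 := by
        calc |u| ^ 3 ≤ (2 * d) ^ 3 := pow_le_pow_left₀ (abs_nonneg _) huD 3
          _ = 8 * d ^ 3 := by ring
      set r := |y - Fcub z| with hr
      have hFz : Fcub z = u ^ 3 := rfl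
      have hrlow : s / 2 ≤ r := by
        have h1 : s - |u ^ 3| ≤ r := by
          have := abs_sub_abs_le_abs_sub y (u ^ 3)
          rw [hr, hFz]; linarith [this]
        have h2 : |u ^ 3| ≤ s / 2 := by
          rw [abs_pow]
          have hd3 : d ^ 3 ≤ ρ ^ 3 := pow_le_pow_left₀ dist_nonneg hzρ'.le 3
          calc |u| ^ 3 ≤ 8 * d ^ 3 := hu3
            _ ≤ 8 * ρ ^ 3 := by linarith
            _ = (2 * ρ) ^ 3 := by ring
            _ = s / 2 := hρ3
        linarith
      have hnum : s ^ ((1:ℝ)/3) - r ^ ((1:ℝ)/3) ≤ K * d ^ 3 := by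
        rcases le_total s r with hsr | hsr
        · have : s ^ ((1:ℝ)/3) ≤ r ^ ((1:ℝ)/3) :=
            Real.rpow_le_rpow hsy.le hsr (by norm_num)
          have : s ^ ((1:ℝ)/3) - r ^ ((1:ℝ)/3) ≤ 0 := by linarith
          refine this.trans (by positivity)
        · have hstep := rpow_third_diff_le (by positivity : (0:ℝ) < s/2) hrlow hsr
          have hsub : s - r ≤ 8 * d ^ 3 := by
            have h2 := abs_sub_abs_le_abs_sub y (y - Fcub z)
            simp only [sub_sub_cancel] at h2
            have h3 : s - r ≤ |Fcub z| := by rw [hr, hsdef]; linarith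
            rw [hFz, abs_pow] at h3
            linarith
          calc s ^ ((1:ℝ)/3) - r ^ ((1:ℝ)/3) ≤ (s - r) / (s/2) ^ ((2:ℝ)/3) := hstep
            _ = (s - r) * M := by rw [hM, div_eq_mul_inv]
            _ ≤ 8 * d ^ 3 * M := by
                apply mul_le_mul_of_nonneg_right hsub hM0
            _ = K * d ^ 3 := by rw [hK]; ring
      have hfx : f x = ENNReal.ofReal (s ^ ((1:ℝ)/3)) := by
        have hfc : Fcub x = 0 := by simp [Fcub, hx0, hx1]
        rw [hfdef]
        simp only [hfc, sub_zero]
        rw [ENNReal.ofReal_rpow_of_nonneg (abs_nonneg _) (by norm_num)]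
      have hfz : f z = ENNReal.ofReal (r ^ ((1:ℝ)/3)) := by
        rw [hfdef]
        simp only [← hr]
        rw [ENNReal.ofReal_rpow_of_nonneg (abs_nonneg _) (by norm_num)]
      rw [hfx, hfz, ← ENNReal.ofReal_sub _ (Real.rpow_nonneg (abs_nonneg _) _),
        edist_dist, ← ENNReal.ofReal_div_of_pos hd0]
      apply ENNReal.ofReal_le_ofReal
      rw [div_le_iff₀ hd0]
      calc s ^ ((1:ℝ)/3) - r ^ ((1:ℝ)/3) ≤ K * d ^ 3 := hnum
        _ = K * d ^ 2 * d := by ring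



/-- the Remark after Theorem 2 of the paper: for `F(x) = (x₁ − x₂)³`,
(a) `F⁻¹(y) = {(t + y^{1/3}, t) : t ∈ ℝ}` (where `c = y^{1/3}` is the real cube root),
`d(x, F⁻¹(y)) = |x₁ − x₂ − y^{1/3}|/√2 ≤ 2^{1/6} |y − F(x)|^{1/3}`, so `F` is metrically
`1/3`-regular at `(0,0)`; (b) nevertheless for every `x = (x₁,x₁)` and every `y ≠ 0`
the local slope `|∇ φ^{1/3}(·,y)|(x) = 0`, where `φ(x,y) = |y − F(x)|`. -/
theorem cube_map_third_regular_but_localSlope_zero :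
    (∀ (x : EuclideanSpace ℝ (Fin 2)) (y c : ℝ), c ^ 3 = y →
      (Fcub ⁻¹' {y} = {p : EuclideanSpace ℝ (Fin 2) | ∃ t : ℝ, p 0 = t + c ∧ p 1 = t} ∧
        Metric.infDist x (Fcub ⁻¹' {y}) = |x 0 - x 1 - c| / Real.sqrt 2 ∧
        Metric.infDist x (Fcub ⁻¹' {y}) ≤
          (2:ℝ) ^ ((1:ℝ)/6) * |y - Fcub x| ^ ((1:ℝ)/3))) ∧
    (∃ τ > (0:ℝ), ∃ δ > (0:ℝ), ∀ (x : EuclideanSpace ℝ (Fin 2)) (y : ℝ),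
      ‖x‖ < δ → |y| < δ →
      Metric.infDist x (Fcub ⁻¹' {y}) ≤ τ * |y - Fcub x| ^ ((1:ℝ)/3)) ∧
    (∀ (a y : ℝ), y ≠ 0 →
      localSlope
        (fun p : EuclideanSpace ℝ (Fin 2) => ENNReal.ofReal |y - Fcub p| ^ ((1:ℝ)/3))
        (WithLp.toLp 2 (fun _ => a)) = 0) := by
  have key : ∀ (x : EuclideanSpace ℝ (Fin 2)) (y c : ℝ), c ^ 3 = y →
      Metric.infDist x (Fcub ⁻¹' {y}) ≤ (2:ℝ) ^ ((1:ℝ)/6) * |y - Fcub x| ^ ((1:ℝ)/3) := by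
    intro x y c hc
    rw [infdist_eq x y c hc]
    have h1 := key_ineq (x 0 - x 1) c
    have h2 : |y - Fcub x| = |c ^ 3 - (x 0 - x 1) ^ 3| := by rw [← hc]; rfl
    rw [h2]
    exact h1
  refine ⟨fun x y c hc => ⟨preim y c hc, infdist_eq x y c hc, key x y c hc⟩, ?_, fun a y hy => slope_zero a y hy⟩
  refine ⟨(2:ℝ) ^ ((1:ℝ)/6), by positivity, 1, one_pos, fun x y _ _ => ?_⟩
  obtain ⟨c, hc⟩ := cuberoot_exists y
  exact key x y c hc

end
end

section
/- Let X be a Banach space, Y a normed space and (u,v) ∈ X×Y. Suppose F : X ⇉ Y is a closed set-valued map that is directionally metrically regular at (x̄,ȳ) ∈ gph F in direction (u,v) with modulus τ > 0. If g : X → Y is locally Lipschitz around x̄ with constant λ > 0 satisfying λτ < 1, and g is Hadamard differentiable at x̄ with respect to the direction u, then the set-valued map F + g (defined by (F+g)(x) = F(x) + g(x)) is directionally metrically regular at (x̄, ȳ + g(x̄)) in the direction (u, v + Dg(x̄)(u)). -/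
open Filter Metric Set Topology
open scoped ENNReal NNReal Classical

noncomputable section

/-- `g` is Hadamard differentiable at `xbar` with respect to the direction `u`,
with derivative `L = Dg(xbar)(u)`:  `(g(xbar + t w) − g(xbar))/t → L` as `t ↓ 0, w → u`. -/
def HadamardDirDeriv {X Y : Type*} [NormedAddCommGroup X] [NormedSpace ℝ X]
    [NormedAddCommGroup Y] [NormedSpace ℝ Y] (g : X → Y) (xbar u : X) (L : Y) : Prop :=
  Tendsto (fun p : ℝ × X => (p.1)⁻¹ • (g (xbar + p.1 • p.2) - g xbar))
    ((𝓝[>] (0:ℝ)) ×ˢ 𝓝 u) (𝓝 L)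


lemma infEdist_sub_set {Y : Type*} [NormedAddCommGroup Y] (s : Set Y) (c y : Y) :
    EMetric.infEdist y {w : Y | w - c ∈ s} = EMetric.infEdist (y - c) s := by
  have hset : {w : Y | w - c ∈ s} = (fun v => v + c) '' s := by
    ext w
    simp only [Set.mem_setOf_eq, Set.mem_image]
    constructor
    · intro h; exact ⟨w - c, h, by abel⟩
    · rintro ⟨a, ha, rfl⟩; simpa using ha
  have hiso : Isometry (fun v : Y => v + c) := Isometry.of_dist_eq (by
    intro a b; simp [dist_eq_norm])
  have h2 := EMetric.infEdist_image (x := y - c) (t := s) hiso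
  rw [hset]; unfold EMetric.infEdist; rw [← h2]
  congr 1
  abel


lemma mem_coneBall2_zero {X Y : Type*} [NormedAddCommGroup X] [NormedSpace ℝ X]
    [NormedAddCommGroup Y] [NormedSpace ℝ Y] {ε : ℝ} (hε : 0 < ε) (p : X × Y) :
    p ∈ coneBall2 (0:X) (0:Y) ε := by
  obtain ⟨a, b⟩ := p
  by_cases h : ‖a‖ + ‖b‖ = 0
  · have ha : a = 0 := norm_eq_zero.mp (by
      have := norm_nonneg a; have := norm_nonneg b; linarith)
    have hb : b = 0 := norm_eq_zero.mp (by
      have := norm_nonneg a; have := norm_nonneg b; linarith)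
    exact ⟨0, le_rfl, 0, 0, by simpa, by simp [ha, hb]⟩
  · have hs : 0 < ‖a‖ + ‖b‖ := lt_of_le_of_ne (by positivity) (Ne.symm h)
    set s := ‖a‖ + ‖b‖ with hsdef
    set lam : ℝ := 2 * s / ε with hlamdef
    have hlam : 0 < lam := by positivity
    refine ⟨lam, hlam.le, lam⁻¹ • a, lam⁻¹ • b, ?_, ?_⟩
    · rw [sub_zero, sub_zero, norm_smul, norm_smul, Real.norm_eq_abs,
        abs_of_nonneg (inv_nonneg.mpr hlam.le)]
      have : lam⁻¹ * ‖a‖ + lam⁻¹ * ‖b‖ = lam⁻¹ * s := by rw [hsdef]; ring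
      rw [this, hlamdef]
      rw [show (2 * s / ε)⁻¹ * s = ε / 2 by field_simp]
      linarith
    · rw [smul_inv_smul₀ (ne_of_gt hlam), smul_inv_smul₀ (ne_of_gt hlam)]

lemma had_deriv_zero {X Y : Type*} [NormedAddCommGroup X] [NormedSpace ℝ X]
    [NormedAddCommGroup Y] [NormedSpace ℝ Y] (g : X → Y) (xbar : X) (L : Y)
    (r lam : ℝ) (hr : 0 < r) (hlam : 0 < lam)
    (hLipr : ∀ x ∈ Metric.ball xbar r, ∀ z ∈ Metric.ball xbar r, ‖g x - g z‖ ≤ lam * ‖x - z‖)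
    (hHad : HadamardDirDeriv g xbar 0 L) : L = 0 := by
  have h2 : Tendsto (fun p : ℝ × X => (p.1)⁻¹ • (g (xbar + p.1 • p.2) - g xbar))
      ((𝓝[>] (0:ℝ)) ×ˢ 𝓝 (0:X)) (𝓝 0) := by
    apply squeeze_zero_norm' (a := fun p : ℝ × X => lam * ‖p.2‖)
    · rw [Filter.eventually_prod_iff]
      refine ⟨fun t => t ∈ Set.Ioo (0:ℝ) 1, ?_, fun w => ‖w‖ < r/2, ?_, ?_⟩
      · exact Ioo_mem_nhdsGT (by norm_num)
      · have : Metric.ball (0:X) (r/2) ∈ 𝓝 (0:X) := Metric.ball_mem_nhds _ (by positivity)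
        filter_upwards [this] with w hw
        simpa [Metric.mem_ball, dist_eq_norm] using hw
      · intro t ht w hw
        have ht0 : 0 < t := ht.1
        have hmem : xbar + t • w ∈ Metric.ball xbar r := by
          rw [Metric.mem_ball, dist_eq_norm]
          have : ‖xbar + t • w - xbar‖ = t * ‖w‖ := by
            rw [show xbar + t • w - xbar = t • w by abel, norm_smul, Real.norm_eq_abs,
              abs_of_nonneg ht0.le]
          rw [this]
          nlinarith [ht.2, hw, norm_nonneg w]
        have hb : ‖g (xbar + t • w) - g xbar‖ ≤ lam * ‖xbar + t • w - xbar‖ :=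
          hLipr _ hmem _ (Metric.mem_ball_self hr)
        rw [norm_smul, Real.norm_eq_abs, abs_of_nonneg (inv_nonneg.mpr ht0.le)]
        have heq : ‖xbar + t • w - xbar‖ = t * ‖w‖ := by
          rw [show xbar + t • w - xbar = t • w by abel, norm_smul, Real.norm_eq_abs,
            abs_of_nonneg ht0.le]
        rw [heq] at hb
        calc t⁻¹ * ‖g (xbar + t • w) - g xbar‖ ≤ t⁻¹ * (lam * (t * ‖w‖)) := by
              exact mul_le_mul_of_nonneg_left hb (inv_nonneg.mpr ht0.le)
          _ = lam * ‖w‖ := by field_simp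
    · have hn : Tendsto (fun p : ℝ × X => ‖p.2‖) ((𝓝[>] (0:ℝ)) ×ˢ 𝓝 (0:X)) (𝓝 0) := by
        have := (continuous_norm.tendsto (0:X)).comp (Filter.tendsto_snd
          (f := 𝓝[>] (0:ℝ)) (g := 𝓝 (0:X)))
        simpa [Function.comp_def] using this
      simpa using hn.const_mul lam
  exact tendsto_nhds_unique hHad h2


lemma core_iteration {X Y : Type*} [NormedAddCommGroup X] [NormedSpace ℝ X] [CompleteSpace X]
    [NormedAddCommGroup Y] [NormedSpace ℝ Y]
    (F : X → Set Y) (hF : IsClosed {p : X × Y | p.2 ∈ F p.1})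
    (g : X → Y) (x : X) (y : Y) (lam τ τ₁ d : ℝ)
    (hτ0 : 0 ≤ τ) (hττ₁ : τ < τ₁) (hlam : 0 < lam) (hq : lam * τ₁ < 1)
    (hd : 0 < d)
    (S : Set X) (hS : ∀ x' : X, ‖x' - x‖ ≤ τ₁ * d / (1 - lam * τ₁) → x' ∈ S)
    (hLipS : ∀ a ∈ S, ∀ b ∈ S, ‖g a - g b‖ ≤ lam * ‖a - b‖)
    (hHyp : ∀ x' ∈ S, ∀ d' : ℝ, 0 < d' → d' ≤ d →
      EMetric.infEdist (y - g x') (F x') ≤ ENNReal.ofReal d' →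
      EMetric.infEdist x' {z : X | y - g x' ∈ F z} ≤ ENNReal.ofReal (τ * d'))
    (hinit : EMetric.infEdist (y - g x) (F x) ≤ ENNReal.ofReal d) :
    ∃ xi : X, y - g xi ∈ F xi ∧ ‖xi - x‖ ≤ τ₁ * d / (1 - lam * τ₁) := by
  set q : ℝ := lam * τ₁ with hqdef
  have hτ₁0 : 0 < τ₁ := lt_of_le_of_lt hτ0 hττ₁
  have hq0 : 0 < q := mul_pos hlam hτ₁0
  have h1q : 0 < 1 - q := by linarith
  set B : ℝ := τ₁ * d / (1 - q) with hBdef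
  have hB0 : 0 < B := by positivity
  set Inv : ℕ → X → Prop := fun k z =>
    ‖z - x‖ ≤ τ₁ * d * (1 - q ^ k) / (1 - q) ∧
    EMetric.infEdist (y - g z) (F z) ≤ ENNReal.ofReal (q ^ k * d) with hInvdef
  have hqk1 : ∀ k : ℕ, q ^ k ≤ 1 := fun k => pow_le_one₀ hq0.le hq.le
  have hqk0 : ∀ k : ℕ, 0 < q ^ k := fun k => pow_pos hq0 k
  have hfrac : ∀ k : ℕ, τ₁ * d * (1 - q ^ k) / (1 - q) ≤ B := by
    intro k
    rw [hBdef, div_le_div_iff₀ h1q h1q]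
    nlinarith [hqk0 k, mul_pos (mul_pos hτ₁0 hd) h1q]
  have hmemS : ∀ k (z : X), Inv k z → z ∈ S := by
    intro k z hz
    exact hS z (hz.1.trans (hfrac k))
  have step : ∀ k (z : X), Inv k z → ∃ z', Inv (k+1) z' ∧ ‖z' - z‖ ≤ τ₁ * (q ^ k * d) ∧
      y - g z ∈ F z' := by
    intro k z hz
    have hzS : z ∈ S := hmemS k z hz
    have hdk : 0 < q ^ k * d := mul_pos (hqk0 k) hd
    have h1 : EMetric.infEdist z {z' : X | y - g z ∈ F z'} ≤ ENNReal.ofReal (τ * (q ^ k * d)) :=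
      hHyp z hzS _ hdk (by nlinarith [hqk1 k]) hz.2
    have h2 : EMetric.infEdist z {z' : X | y - g z ∈ F z'} < ENNReal.ofReal (τ₁ * (q ^ k * d)) := by
      refine lt_of_le_of_lt h1 (ENNReal.ofReal_lt_ofReal_iff (by positivity) |>.mpr ?_)
      nlinarith
    obtain ⟨z', hz'mem, hz'd⟩ := EMetric.infEdist_lt_iff.mp h2
    rw [edist_lt_ofReal] at hz'd
    have hdzz : ‖z' - z‖ ≤ τ₁ * (q ^ k * d) := by
      rw [← dist_eq_norm, dist_comm]; exact hz'd.le
    have hz'x : ‖z' - x‖ ≤ τ₁ * d * (1 - q ^ (k+1)) / (1 - q) := by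
      calc ‖z' - x‖ = dist z' x := (dist_eq_norm _ _).symm
        _ ≤ dist z' z + dist z x := dist_triangle _ _ _
        _ = ‖z' - z‖ + ‖z - x‖ := by rw [dist_eq_norm, dist_eq_norm]
        _ ≤ τ₁ * (q ^ k * d) + τ₁ * d * (1 - q ^ k) / (1 - q) := add_le_add hdzz hz.1
        _ = τ₁ * d * (1 - q ^ (k+1)) / (1 - q) := by field_simp; ring
    have hz'S : z' ∈ S := hS z' (hz'x.trans (hfrac (k+1)))
    refine ⟨z', ⟨hz'x, ?_⟩, hdzz, hz'mem⟩
    calc EMetric.infEdist (y - g z') (F z') ≤ edist (y - g z') (y - g z) :=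
          EMetric.infEdist_le_edist_of_mem hz'mem
      _ = ENNReal.ofReal ‖g z - g z'‖ := by
          rw [edist_dist, dist_eq_norm]; congr 1; abel_nf
      _ ≤ ENNReal.ofReal (q ^ (k+1) * d) := by
          apply ENNReal.ofReal_le_ofReal
          calc ‖g z - g z'‖ ≤ lam * ‖z - z'‖ := hLipS z hzS z' hz'S
            _ ≤ lam * (τ₁ * (q ^ k * d)) := by
                refine mul_le_mul_of_nonneg_left ?_ hlam.le
                rw [norm_sub_rev]; exact hdzz
            _ = q ^ (k+1) * d := by rw [hqdef]; ring
  choose! next h1 h2 h3 using step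
  set seq : ℕ → X := fun k => Nat.rec x (fun k z => next k z) k with hseqdef
  have hseq0 : seq 0 = x := rfl
  have hseqS : ∀ k, seq (k+1) = next k (seq k) := fun k => rfl
  have hInv : ∀ k, Inv k (seq k) := by
    intro k; induction k with
    | zero => exact ⟨by simp [hseq0], by simpa [hseq0] using hinit⟩
    | succ k ih => rw [hseqS]; exact h1 k (seq k) ih
  have hdist : ∀ k, dist (seq k) (seq (k+1)) ≤ (τ₁ * d) * q ^ k := by
    intro k
    rw [dist_comm, dist_eq_norm, hseqS]
    exact (h2 k (seq k) (hInv k)).trans_eq (by ring)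
  obtain ⟨xi, hxi⟩ := cauchySeq_tendsto_of_complete (cauchySeq_of_le_geometric q (τ₁*d) hq hdist)
  have hboundB : ∀ k, ‖seq k - x‖ ≤ B := fun k => (hInv k).1.trans (hfrac k)
  have hxix : ‖xi - x‖ ≤ B := by
    have ht : Tendsto (fun k => ‖seq k - x‖) atTop (𝓝 ‖xi - x‖) :=
      ((hxi.sub tendsto_const_nhds).norm)
    exact le_of_tendsto ht (Eventually.of_forall hboundB)
  have hxiS : xi ∈ S := hS xi hxix
  have hgtend : Tendsto (fun k => g (seq k)) atTop (𝓝 (g xi)) := by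
    rw [tendsto_iff_dist_tendsto_zero]
    apply squeeze_zero (fun k => dist_nonneg) (g := fun k => lam * dist (seq k) xi)
    · intro k
      rw [dist_eq_norm, dist_eq_norm]
      exact hLipS _ (hmemS k _ (hInv k)) _ hxiS
    · have : Tendsto (fun k => dist (seq k) xi) atTop (𝓝 0) :=
        tendsto_iff_dist_tendsto_zero.mp hxi
      simpa using this.const_mul lam
  have hmemgr : ∀ k, ((seq (k+1), y - g (seq k)) : X × Y) ∈ {p : X × Y | p.2 ∈ F p.1} := by
    intro k; exact h3 k (seq k) (hInv k)
  have htend2 : Tendsto (fun k => ((seq (k+1), y - g (seq k)) : X × Y)) atTop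
      (𝓝 (xi, y - g xi)) := by
    refine Tendsto.prodMk_nhds ?_ ?_
    · exact hxi.comp (Filter.tendsto_add_atTop_nat 1)
    · exact tendsto_const_nhds.sub hgtend
  have hfin : ((xi, y - g xi) : X × Y) ∈ {p : X × Y | p.2 ∈ F p.1} :=
    hF.mem_of_tendsto htend2 (Eventually.of_forall hmemgr)
  exact ⟨xi, hfin, hxix⟩

set_option maxHeartbeats 2000000 in
/-- Theorem 4 of the paper: if the closed multifunction `F` is
directionally metrically regular at `(xbar, ybar) ∈ gph F` in direction `(u,v)` with
modulus `τ > 0`, and `g` is locally Lipschitz around `xbar` with constant `λ > 0`,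
`λτ < 1`, and Hadamard differentiable at `xbar` with respect to the direction `u` with
derivative `L = Dg(xbar)(u)`, then `F + g` is directionally metrically regular at
`(xbar, ybar + g(xbar))` in direction `(u, v + Dg(xbar)(u))`. -/
theorem dirMetricRegular_perturbation
    {X Y : Type*} [NormedAddCommGroup X] [NormedSpace ℝ X] [CompleteSpace X]
    [NormedAddCommGroup Y] [NormedSpace ℝ Y]
    (F : X → Set Y) (hF : IsClosed {p : X × Y | p.2 ∈ F p.1})
    (xbar : X) (ybar : Y) (hxy : ybar ∈ F xbar) (u : X) (v : Y)
    (τ : ℝ) (hτ : 0 < τ) (hreg : DirHolderRegular F xbar ybar u v 1 τ)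
    (g : X → Y) (lam : ℝ) (hlam : 0 < lam) (hlamτ : lam * τ < 1)
    (hLip : ∃ r > (0:ℝ), ∀ x ∈ Metric.ball xbar r, ∀ z ∈ Metric.ball xbar r,
      ‖g x - g z‖ ≤ lam * ‖x - z‖)
    (L : Y) (hHad : HadamardDirDeriv g xbar u L) :
    ∃ τ' > (0:ℝ),
      DirHolderRegular (fun x : X => {w : Y | w - g x ∈ F x})
        xbar (ybar + g xbar) u (v + L) 1 τ' := by
  obtain ⟨δ₀, hδ₀, ε₀, hε₀, η₀, hη₀, H⟩ := hreg
  obtain ⟨r, hr, hLipr⟩ := hLip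
  -- basic constants
  have hτ1lt : τ < 1 / lam := by
    rw [lt_div_iff₀ hlam, mul_comm]; exact hlamτ
  set τ₁ : ℝ := (τ + 1 / lam) / 2 with hτ₁def
  have hττ₁ : τ < τ₁ := by rw [hτ₁def]; linarith
  have hτ₁pos : 0 < τ₁ := lt_of_le_of_lt hτ.le hττ₁
  have hq : lam * τ₁ < 1 := by
    have : lam * τ₁ = (lam * τ + 1) / 2 := by rw [hτ₁def]; field_simp
    rw [this]; linarith
  have h1q : 0 < 1 - lam * τ₁ := by linarith
  set T : ℝ := τ₁ / (1 - lam * τ₁) with hTdef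
  have hT : 0 < T := by positivity
  set K : ℝ := 1 + lam with hKdef
  have hK : 0 < K := by positivity
  have hK1 : 1 ≤ K := by rw [hKdef]; linarith
  set C : ℝ := K * T with hCdef
  have hC : 0 < C := by positivity
  -- Hadamard in ε-δ form
  have hHadq : ∀ e > (0:ℝ), ∃ t₀ > (0:ℝ), ∃ εw > (0:ℝ), ∀ t (w : X), 0 < t → t < t₀ →
      ‖w - u‖ < εw → ‖t⁻¹ • (g (xbar + t • w) - g xbar) - L‖ < e := by
    intro e he
    have h := Metric.tendsto_nhds.mp hHad e he
    rw [Filter.eventually_prod_iff] at h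
    obtain ⟨pa, hpa, pb, hpb, himp⟩ := h
    obtain ⟨t₀, ht₀, hIoo⟩ := mem_nhdsGT_iff_exists_Ioo_subset.mp hpa
    obtain ⟨εw, hεw, hball⟩ := Metric.mem_nhds_iff.mp hpb
    refine ⟨t₀, ht₀, εw, hεw, fun t w ht ht' hw => ?_⟩
    have := himp (hIoo ⟨ht, ht'⟩) (hball (by rwa [Metric.mem_ball, dist_eq_norm]))
    rwa [dist_eq_norm] at this
  -- cone transfer
  have coneKey : ∃ ε1 > (0:ℝ), ∃ δ1 > (0:ℝ), ∃ μ > (0:ℝ), ∀ x : X, ∀ y : Y,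
      0 < ‖x - xbar‖ + ‖y - (ybar + g xbar)‖ →
      ‖x - xbar‖ + ‖y - (ybar + g xbar)‖ < δ1 →
      ‖x - xbar‖ < r →
      (x - xbar, y - (ybar + g xbar)) ∈ coneBall2 u (v + L) ε1 →
      ∀ x' : X, ‖x' - xbar‖ < r →
      (1 + lam) * ‖x' - x‖ ≤ μ * (‖x - xbar‖ + ‖y - (ybar + g xbar)‖) →
      (x' - xbar, y - g x' - ybar) ∈ coneBall2 u v ε₀ := by
    by_cases hNz : ‖u‖ + ‖v + L‖ = 0
    · have hu : u = 0 := norm_eq_zero.mp (by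
        have := norm_nonneg u; have := norm_nonneg (v + L); linarith)
      have hvL : v + L = 0 := norm_eq_zero.mp (by
        have := norm_nonneg u; have := norm_nonneg (v + L); linarith)
      have hHad0 : HadamardDirDeriv g xbar 0 L := by rwa [hu] at hHad
      have hL : L = 0 := had_deriv_zero g xbar L r lam hr hlam hLipr hHad0
      have hv : v = 0 := by rw [hL, add_zero] at hvL; exact hvL
      refine ⟨1, one_pos, 1, one_pos, 1, one_pos, ?_⟩
      intro x y _ _ _ _ x' _ _
      rw [hu, hv]
      exact mem_coneBall2_zero hε₀ _
    · have hNpos : 0 < ‖u‖ + ‖v + L‖ := lt_of_le_of_ne (by positivity) (Ne.symm hNz)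
      set N : ℝ := ‖u‖ + ‖v + L‖ with hNdef
      obtain ⟨t₀, ht₀, εw, hεw, hHq⟩ := hHadq (ε₀ / 6) (by positivity)
      set ε1 : ℝ := min εw (min (ε₀ / 6) (N / 2)) with hε1def
      have hε1 : 0 < ε1 := by
        rw [hε1def]; refine lt_min hεw (lt_min (by positivity) (by positivity))
      have hε1w : ε1 ≤ εw := min_le_left _ _
      have hε1ε : ε1 ≤ ε₀ / 6 := le_trans (min_le_right _ _) (min_le_left _ _)
      have hε1N : ε1 ≤ N / 2 := le_trans (min_le_right _ _) (min_le_right _ _)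
      set M : ℝ := N + ε1 with hMdef
      have hM : 0 < M := by positivity
      set δ1 : ℝ := N * t₀ / 2 with hδ1def
      have hδ1 : 0 < δ1 := by positivity
      set μ : ℝ := ε₀ / (2 * M) with hμdef
      have hμ : 0 < μ := by positivity
      have hM0 : M ≠ 0 := ne_of_gt hM
      clear_value N ε1 M δ1 μ
      refine ⟨ε1, hε1, δ1, hδ1, μ, hμ, ?_⟩
      intro x y hρpos hρδ1 hxr hcone x' hx'r hx'μ
      obtain ⟨lam0, hlam0, w, z, hwz, hpair⟩ := hcone
      obtain ⟨hx1, hx2⟩ := Prod.ext_iff.mp hpair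
      simp only at hx1 hx2
      have hρeq : ‖x - xbar‖ + ‖y - (ybar + g xbar)‖ = lam0 * (‖w‖ + ‖z‖) := by
        rw [hx1, hx2, norm_smul, norm_smul, Real.norm_eq_abs, abs_of_nonneg hlam0]; ring
      have hlam0pos : 0 < lam0 := by
        rcases hlam0.lt_or_eq with h | h
        · exact h
        · exfalso; rw [hρeq, ← h] at hρpos; simp at hρpos
      set sw : ℝ := ‖w‖ + ‖z‖ with hswdef
      clear_value sw
      have hswpos : 0 < sw := by
        by_contra hc
        push_neg at hc
        have : lam0 * sw ≤ 0 := mul_nonpos_of_nonneg_of_nonpos hlam0 hc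
        rw [hρeq] at hρpos; linarith
      have hwu : ‖w - u‖ < ε1 := by
        have := norm_nonneg (z - (v + L)); linarith
      have hzvL : ‖z - (v + L)‖ < ε1 := by
        have := norm_nonneg (w - u); linarith
      have hb1 := abs_le.mp (abs_norm_sub_norm_le w u)
      have hb2 := abs_le.mp (abs_norm_sub_norm_le z (v + L))
      have hswlow : N - ε1 ≤ sw := by
        rw [hswdef, hNdef]
        linarith only [hb1.1, hb2.1, hwz]
      have hswup : sw < M := by
        rw [hswdef, hMdef, hNdef]
        linarith only [hb1.2, hb2.2, hwz]
      have hswN2 : N / 2 ≤ sw := by linarith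
      have hlt₀ : lam0 < t₀ := by
        have h1 : lam0 * sw < N * t₀ / 2 := by rw [← hρeq, ← hδ1def]; exact hρδ1
        have h2 : lam0 * (N / 2) ≤ lam0 * sw := mul_le_mul_of_nonneg_left hswN2 hlam0pos.le
        have h3 : lam0 * N < t₀ * N := by linarith
        exact lt_of_mul_lt_mul_right h3 hNpos.le
      have hxeq : xbar + lam0 • w = x := by rw [← hx1]; abel
      have hHval : ‖lam0⁻¹ • (g x - g xbar) - L‖ < ε₀ / 6 := by
        have := hHq lam0 w hlam0pos hlt₀ (hwu.trans_le hε1w)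
        rwa [hxeq] at this
      have hgxx' : ‖g x - g x'‖ ≤ lam * ‖x - x'‖ := by
        refine hLipr x ?_ x' ?_
        · rwa [Metric.mem_ball, dist_eq_norm]
        · rwa [Metric.mem_ball, dist_eq_norm]
      have hlam0inv : 0 < lam0⁻¹ := inv_pos.mpr hlam0pos
      refine ⟨lam0, hlam0, w + lam0⁻¹ • (x' - x),
        z - lam0⁻¹ • (g x - g xbar) + lam0⁻¹ • (g x - g x'), ?_, ?_⟩
      · -- norm bound
        have e1 : w + lam0⁻¹ • (x' - x) - u = (w - u) + lam0⁻¹ • (x' - x) := by abel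
        have e2 : z - lam0⁻¹ • (g x - g xbar) + lam0⁻¹ • (g x - g x') - v =
            (z - (v + L)) + (L - lam0⁻¹ • (g x - g xbar)) + lam0⁻¹ • (g x - g x') := by abel
        rw [e1, e2]
        have n1 : ‖(w - u) + lam0⁻¹ • (x' - x)‖ ≤ ‖w - u‖ + lam0⁻¹ * ‖x' - x‖ := by
          refine (norm_add_le _ _).trans ?_
          rw [norm_smul, Real.norm_eq_abs, abs_of_nonneg hlam0inv.le]
        have n2 : ‖(z - (v + L)) + (L - lam0⁻¹ • (g x - g xbar)) + lam0⁻¹ • (g x - g x')‖ ≤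
            ‖z - (v + L)‖ + ‖lam0⁻¹ • (g x - g xbar) - L‖ + lam0⁻¹ * ‖g x - g x'‖ := by
          refine (norm_add₃_le).trans ?_
          rw [norm_smul, Real.norm_eq_abs, abs_of_nonneg hlam0inv.le, norm_sub_rev L]
        have hμM : lam0⁻¹ * ‖x' - x‖ + lam0⁻¹ * ‖g x - g x'‖ ≤ ε₀ / 2 := by
          have h3 : ‖x - x'‖ = ‖x' - x‖ := norm_sub_rev x x'
          have h4 : (1 + lam) * ‖x' - x‖ ≤ μ * (lam0 * sw) := by
            rw [← hρeq]; exact hx'μ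
          have h5 : lam0⁻¹ * ((1 + lam) * ‖x' - x‖) ≤ lam0⁻¹ * (μ * (lam0 * sw)) :=
            mul_le_mul_of_nonneg_left h4 hlam0inv.le
          have h6 : lam0⁻¹ * (μ * (lam0 * sw)) = μ * sw := by
            rw [show lam0⁻¹ * (μ * (lam0 * sw)) = lam0⁻¹ * lam0 * (μ * sw) by ring,
              inv_mul_cancel₀ (ne_of_gt hlam0pos), one_mul]
          have h7 : μ * sw ≤ μ * M := mul_le_mul_of_nonneg_left hswup.le hμ.le
          have h8 : μ * M = ε₀ / 2 := by rw [hμdef]; field_simp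
          have h9 : lam0⁻¹ * ‖g x - g x'‖ ≤ lam0⁻¹ * (lam * ‖x' - x‖) := by
            refine mul_le_mul_of_nonneg_left ?_ hlam0inv.le
            rw [← h3]; exact hgxx'
          have h10 : lam0⁻¹ * ((1 + lam) * ‖x' - x‖) ≤ lam0⁻¹ * (μ * (lam0 * sw)) := h5
          linarith only [h10, h6, h7, h8, h9]
        calc ‖(w - u) + lam0⁻¹ • (x' - x)‖ +
            ‖(z - (v + L)) + (L - lam0⁻¹ • (g x - g xbar)) + lam0⁻¹ • (g x - g x')‖ ≤
            (‖w - u‖ + lam0⁻¹ * ‖x' - x‖) +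
            (‖z - (v + L)‖ + ‖lam0⁻¹ • (g x - g xbar) - L‖ + lam0⁻¹ * ‖g x - g x'‖) :=
              add_le_add n1 n2
          _ < ε₀ := by
              have := hwu.trans_le hε1ε
              have := hzvL.trans_le hε1ε
              linarith [hHval, hμM]
      · -- the pair equality
        have hfst : x' - xbar = lam0 • (w + lam0⁻¹ • (x' - x)) := by
          rw [smul_add, smul_inv_smul₀ (ne_of_gt hlam0pos), ← hx1]; abel
        have hsnd : y - g x' - ybar =
            lam0 • (z - lam0⁻¹ • (g x - g xbar) + lam0⁻¹ • (g x - g x')) := by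
          rw [smul_add, smul_sub, smul_inv_smul₀ (ne_of_gt hlam0pos),
            smul_inv_smul₀ (ne_of_gt hlam0pos), ← hx2]
          abel
        rw [Prod.ext_iff]; exact ⟨hfst, hsnd⟩
  obtain ⟨ε1, hε1, δ1, hδ1, μ, hμ, hckey⟩ := coneKey
  -- final constants
  set η : ℝ := min 1 (min (1 / (2 * K * C)) (min (η₀ / (2 * K)) (μ / C))) with hηdef
  have hηpos : 0 < η := by
    rw [hηdef]
    refine lt_min one_pos (lt_min (by positivity) (lt_min (by positivity) (by positivity)))
  have hη1 : η ≤ 1 := min_le_left _ _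
  have hη2 : η ≤ 1 / (2 * K * C) := le_trans (min_le_right _ _) (min_le_left _ _)
  have hη3 : η ≤ η₀ / (2 * K) :=
    le_trans (min_le_right _ _) (le_trans (min_le_right _ _) (min_le_left _ _))
  have hη4 : η ≤ μ / C :=
    le_trans (min_le_right _ _) (le_trans (min_le_right _ _) (min_le_right _ _))
  set A : ℝ := K + C with hAdef
  have hA : 0 < A := by positivity
  set δ : ℝ := min (δ₀ / A) (min δ1 (r / (1 + T))) with hδdef
  have hδpos : 0 < δ := by
    rw [hδdef]
    refine lt_min (by positivity) (lt_min hδ1 (by positivity))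
  have hδA : δ ≤ δ₀ / A := min_le_left _ _
  have hδδ1 : δ ≤ δ1 := le_trans (min_le_right _ _) (min_le_left _ _)
  have hδr : δ ≤ r / (1 + T) := le_trans (min_le_right _ _) (min_le_right _ _)
  have hδr' : δ ≤ r := hδr.trans (div_le_self hr.le (by linarith [hT]))
  have hK0 : K ≠ 0 := ne_of_gt hK
  have hC0 : C ≠ 0 := ne_of_gt hC
  have hA0 : A ≠ 0 := ne_of_gt hA
  have h1q0 : (1:ℝ) - lam * τ₁ ≠ 0 := ne_of_gt h1q
  clear_value τ₁ T K C η A δ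
  refine ⟨T, hT, δ, hδpos, ε1, hε1, η, hηpos, ?_⟩
  intro x y hρδ hcone hsmall
  -- notation
  have hρ0 : 0 ≤ ‖x - xbar‖ + ‖y - (ybar + g xbar)‖ := by positivity
  rw [show (1:ℝ)/1 = 1 by norm_num, Real.rpow_one] at hsmall
  simp only [] at hsmall
  rw [infEdist_sub_set] at hsmall
  simp only [ENNReal.rpow_one, Set.mem_setOf_eq]
  rw [infEdist_sub_set]
  set D := EMetric.infEdist (y - g x) (F x) with hDdef
  by_cases hD0 : D = 0
  · have hFxclosed : IsClosed (F x) := by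
      have heq : F x = (fun y' : Y => ((x, y') : X × Y)) ⁻¹' {p : X × Y | p.2 ∈ F p.1} := rfl
      rw [heq]
      exact hF.preimage (Continuous.prodMk_right x)
    have hmem : y - g x ∈ F x := by
      have := EMetric.mem_closure_iff_infEdist_zero.mpr hD0
      rwa [hFxclosed.closure_eq] at this
    have hxmem : x ∈ {x' : X | y - g x' ∈ F x'} := hmem
    unfold EMetric.infEdist; rw [EMetric.infEdist_zero_of_mem hxmem]
    exact zero_le
  · have hDfin : D ≠ ⊤ := ne_top_of_le_ne_top ENNReal.ofReal_ne_top hsmall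
    set d := D.toReal with hddef
    have hd0 : 0 < d := ENNReal.toReal_pos hD0 hDfin
    have hdηρ : d ≤ η * (‖x - xbar‖ + ‖y - (ybar + g xbar)‖) :=
      ENNReal.toReal_le_of_le_ofReal (by positivity) hsmall
    set ρ := ‖x - xbar‖ + ‖y - (ybar + g xbar)‖ with hρdef
    have hρpos : 0 < ρ := by
      rcases lt_or_ge 0 ρ with h | h
      · exact h
      · exfalso
        have : η * ρ ≤ 0 := mul_nonpos_of_nonneg_of_nonpos hηpos.le h
        linarith only [this, hdηρ, hd0]
    have hxr : ‖x - xbar‖ < r := by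
      have h1 : ‖x - xbar‖ ≤ ρ := by
        rw [hρdef]; exact le_add_of_nonneg_right (norm_nonneg _)
      linarith [hρδ, hδr']
    have hxball : x ∈ Metric.ball xbar r := by
      rw [Metric.mem_ball, dist_eq_norm]; exact hxr
    have hbarball : xbar ∈ Metric.ball xbar r := Metric.mem_ball_self hr
    have hgx : ‖g x - g xbar‖ ≤ lam * ‖x - xbar‖ := hLipr x hxball xbar hbarball
    set B : ℝ := τ₁ * d / (1 - lam * τ₁) with hBdef
    have hBTd : B = T * d := by rw [hBdef, hTdef, div_mul_eq_mul_div]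
    clear_value d ρ B
    have hiterball : ∀ x' : X, ‖x' - x‖ ≤ B → ‖x' - xbar‖ < r := by
      intro x' h
      have h1 : ‖x' - xbar‖ ≤ ‖x' - x‖ + ‖x - xbar‖ := by
        calc ‖x' - xbar‖ = ‖(x' - x) + (x - xbar)‖ := by congr 1; abel
          _ ≤ _ := norm_add_le _ _
      have h2 : ‖x - xbar‖ ≤ ρ := by
        rw [hρdef]; exact le_add_of_nonneg_right (norm_nonneg _)
      have h3 : B ≤ T * ρ := by
        rw [hBTd]
        have h3a : T * d ≤ T * (η * ρ) := mul_le_mul_of_nonneg_left hdηρ hT.le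
        have h3b : η * ρ ≤ ρ := mul_le_of_le_one_left hρpos.le hη1
        have h3c : T * (η * ρ) ≤ T * ρ := mul_le_mul_of_nonneg_left h3b hT.le
        linarith only [h3a, h3c]
      have h4 : (1 + T) * δ ≤ r :=
        (le_div_iff₀' (by positivity : (0:ℝ) < 1 + T)).mp hδr
      have h5 : (1 + T) * ρ < (1 + T) * δ :=
        mul_lt_mul_of_pos_left hρδ (by positivity)
      linarith only [h1, h2, h3, h4, h5, h]
    set S : Set X := {x' : X | ‖x' - x‖ ≤ τ₁ * d / (1 - lam * τ₁)} ∩ Metric.ball xbar r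
      with hSdef
    have hS : ∀ x' : X, ‖x' - x‖ ≤ τ₁ * d / (1 - lam * τ₁) → x' ∈ S := by
      intro x' h
      refine ⟨h, ?_⟩
      rw [Metric.mem_ball, dist_eq_norm]
      exact hiterball x' (by rw [hBdef]; exact h)
    have hLipS : ∀ a ∈ S, ∀ b ∈ S, ‖g a - g b‖ ≤ lam * ‖a - b‖ := by
      intro a ha b hb
      exact hLipr a ha.2 b hb.2
    have hHyp : ∀ x' ∈ S, ∀ d' : ℝ, 0 < d' → d' ≤ d →
        EMetric.infEdist (y - g x') (F x') ≤ ENNReal.ofReal d' →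
        EMetric.infEdist x' {z : X | y - g x' ∈ F z} ≤ ENNReal.ofReal (τ * d') := by
      rintro x' ⟨hx'B, hx'ball⟩ d' hd'pos hd'd hinf
      rw [Set.mem_setOf_eq] at hx'B
      have hx'r : ‖x' - xbar‖ < r := by
        rw [Metric.mem_ball, dist_eq_norm] at hx'ball; exact hx'ball
      have hgx' : ‖g x' - g x‖ ≤ lam * ‖x' - x‖ := hLipr x' hx'ball x hxball
      have hbac : ‖y - (ybar + g xbar)‖ ≤ ‖y - g x - ybar‖ + lam * ‖x - xbar‖ := by
        have heq : y - (ybar + g xbar) = (y - g x - ybar) + (g x - g xbar) := by abel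
        calc ‖y - (ybar + g xbar)‖ = ‖(y - g x - ybar) + (g x - g xbar)‖ := by rw [heq]
          _ ≤ ‖y - g x - ybar‖ + ‖g x - g xbar‖ := norm_add_le _ _
          _ ≤ _ := by linarith
      have hcab : ‖y - g x - ybar‖ ≤ ‖y - (ybar + g xbar)‖ + lam * ‖x - xbar‖ := by
        have heq : y - g x - ybar = (y - (ybar + g xbar)) + (g xbar - g x) := by abel
        have h5 : ‖g xbar - g x‖ = ‖g x - g xbar‖ := norm_sub_rev _ _
        calc ‖y - g x - ybar‖ = ‖(y - (ybar + g xbar)) + (g xbar - g x)‖ := by rw [heq]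
          _ ≤ ‖y - (ybar + g xbar)‖ + ‖g xbar - g x‖ := norm_add_le _ _
          _ ≤ _ := by rw [h5]; linarith
      have ha'up : ‖x' - xbar‖ ≤ ‖x - xbar‖ + ‖x' - x‖ := by
        calc ‖x' - xbar‖ = ‖(x - xbar) + (x' - x)‖ := by congr 1; abel
          _ ≤ _ := norm_add_le _ _
      have ha'low : ‖x - xbar‖ - ‖x' - x‖ ≤ ‖x' - xbar‖ := by
        have : ‖x - xbar‖ ≤ ‖x' - xbar‖ + ‖x - x'‖ := by
          calc ‖x - xbar‖ = ‖(x' - xbar) + (x - x')‖ := by congr 1; abel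
            _ ≤ _ := norm_add_le _ _
        have h6 : ‖x - x'‖ = ‖x' - x‖ := norm_sub_rev _ _
        linarith [h6 ▸ this]
      have hc'up : ‖y - g x' - ybar‖ ≤ ‖y - g x - ybar‖ + lam * ‖x' - x‖ := by
        have heq : y - g x' - ybar = (y - g x - ybar) + (g x - g x') := by abel
        have h5 : ‖g x - g x'‖ = ‖g x' - g x‖ := norm_sub_rev _ _
        calc ‖y - g x' - ybar‖ = ‖(y - g x - ybar) + (g x - g x')‖ := by rw [heq]
          _ ≤ ‖y - g x - ybar‖ + ‖g x - g x'‖ := norm_add_le _ _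
          _ ≤ _ := by rw [h5]; linarith
      have hc'low : ‖y - g x - ybar‖ - lam * ‖x' - x‖ ≤ ‖y - g x' - ybar‖ := by
        have heq : y - g x - ybar = (y - g x' - ybar) + (g x' - g x) := by abel
        have h7 : ‖y - g x - ybar‖ ≤ ‖y - g x' - ybar‖ + ‖g x' - g x‖ := by
          calc ‖y - g x - ybar‖ = ‖(y - g x' - ybar) + (g x' - g x)‖ := by rw [heq]
            _ ≤ _ := norm_add_le _ _
        linarith
      have hKxx : K * ‖x' - x‖ ≤ C * d := by
        have h8 : ‖x' - x‖ ≤ T * d := by rw [← hBTd, hBdef]; exact hx'B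
        calc K * ‖x' - x‖ ≤ K * (T * d) := mul_le_mul_of_nonneg_left h8 hK.le
          _ = C * d := by rw [hCdef]; ring
      have hCd : C * d ≤ C * η * ρ := by
        calc C * d ≤ C * (η * ρ) := mul_le_mul_of_nonneg_left hdηρ hC.le
          _ = C * η * ρ := by ring
      have hρK : ρ ≤ K * (‖x - xbar‖ + ‖y - g x - ybar‖) := by
        rw [hρdef, hKdef]
        have hlc : 0 ≤ lam * ‖y - g x - ybar‖ :=
          mul_nonneg hlam.le (norm_nonneg _)
        have h20 : (1 + lam) * (‖x - xbar‖ + ‖y - g x - ybar‖) =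
            ‖x - xbar‖ + ‖y - g x - ybar‖ + lam * ‖x - xbar‖ + lam * ‖y - g x - ybar‖ := by
          ring
        linarith only [hbac, hlc, h20]
      -- (a) : closeness to (xbar, ybar)
      have hKx : K * ‖x' - x‖ = ‖x' - x‖ + lam * ‖x' - x‖ := by rw [hKdef]; ring
      have hacond : ‖x' - xbar‖ + ‖y - g x' - ybar‖ < δ₀ := by
        have h9 : ‖x - xbar‖ + ‖y - g x - ybar‖ ≤ K * ρ := by
          rw [hρdef, hKdef]
          have hlb : 0 ≤ lam * ‖y - (ybar + g xbar)‖ :=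
            mul_nonneg hlam.le (norm_nonneg _)
          have h21 : (1 + lam) * (‖x - xbar‖ + ‖y - (ybar + g xbar)‖) =
              ‖x - xbar‖ + ‖y - (ybar + g xbar)‖ + lam * ‖x - xbar‖ +
              lam * ‖y - (ybar + g xbar)‖ := by ring
          linarith only [hcab, hlb, h21]
        have h10 : A * δ ≤ δ₀ := by
          have h10a : A * δ ≤ A * (δ₀ / A) := mul_le_mul_of_nonneg_left hδA hA.le
          have h10b : A * (δ₀ / A) = δ₀ := by field_simp
          linarith only [h10a, h10b]
        have h11a : η * ρ ≤ ρ := mul_le_of_le_one_left hρpos.le hη1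
        have h11b : C * (η * ρ) ≤ C * ρ := mul_le_mul_of_nonneg_left h11a hC.le
        have h11 : C * η * ρ ≤ C * ρ := by
          have hx0 : C * (η * ρ) = C * η * ρ := by ring
          linarith only [h11b, hx0]
        have hKC : K * ρ + C * ρ = A * ρ := by rw [hAdef]; ring
        have hAρδ : A * ρ < A * δ := mul_lt_mul_of_pos_left hρδ hA
        linarith only [ha'up, hc'up, hKx, hKxx, hCd, h9, h11, hKC, hAρδ, h10]
      -- (b) : cone condition
      have hKμ : (1 + lam) * ‖x' - x‖ ≤ μ * ρ := by
        have h12 : C * η ≤ μ := by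
          calc C * η ≤ C * (μ / C) := mul_le_mul_of_nonneg_left hη4 hC.le
            _ = μ := by field_simp
        have h13 : K * ‖x' - x‖ ≤ μ * ρ := by
          have h13a : C * η * ρ ≤ μ * ρ := mul_le_mul_of_nonneg_right h12 hρpos.le
          linarith only [hKxx, hCd, h13a]
        rw [hKdef] at h13; exact h13
      have hbcond : (x' - xbar, y - g x' - ybar) ∈ coneBall2 u v ε₀ :=
        hckey x y (by rw [← hρdef]; exact hρpos)
          (by rw [← hρdef]; exact hρδ.trans_le hδδ1) hxr hcone x' hx'r
          (by rw [← hρdef]; exact hKμ)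
      -- (c) : relative smallness
      have hρ'low : ρ ≤ 2 * K * (‖x' - xbar‖ + ‖y - g x' - ybar‖) := by
        have h14 : K * C * η ≤ 1 / 2 := by
          have h14a : 2 * K * C * η ≤ 2 * K * C * (1 / (2 * K * C)) :=
            mul_le_mul_of_nonneg_left hη2 (by positivity)
          have h15 : 2 * K * C * (1 / (2 * K * C)) = 1 := by field_simp
          linarith only [h14a, h15]
        have hsum : ‖x - xbar‖ + ‖y - g x - ybar‖ - K * ‖x' - x‖ ≤
            ‖x' - xbar‖ + ‖y - g x' - ybar‖ := by
          linarith only [ha'low, hc'low, hKx]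
        have hP1 : 2 * K * (‖x - xbar‖ + ‖y - g x - ybar‖ - K * ‖x' - x‖) ≤
            2 * K * (‖x' - xbar‖ + ‖y - g x' - ybar‖) :=
          mul_le_mul_of_nonneg_left hsum (by positivity)
        have hP2 : K * (K * ‖x' - x‖) ≤ K * (C * η * ρ) :=
          mul_le_mul_of_nonneg_left (hKxx.trans hCd) hK.le
        have h14ρ : K * C * η * ρ ≤ 1 / 2 * ρ :=
          mul_le_mul_of_nonneg_right h14 hρpos.le
        have hexp1 : 2 * K * (‖x - xbar‖ + ‖y - g x - ybar‖ - K * ‖x' - x‖) =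
            2 * (K * (‖x - xbar‖ + ‖y - g x - ybar‖)) - 2 * (K * (K * ‖x' - x‖)) := by ring
        have hexp2 : K * (C * η * ρ) = K * C * η * ρ := by ring
        linarith only [hP1, hP2, h14ρ, hρK, hexp1, hexp2]
      have hd'η₀ : d' ≤ η₀ * (‖x' - xbar‖ + ‖y - g x' - ybar‖) := by
        have h17 : 2 * K * η ≤ η₀ := by
          have : 2 * K * η ≤ 2 * K * (η₀ / (2 * K)) :=
            mul_le_mul_of_nonneg_left hη3 (by positivity)
          have h18 : 2 * K * (η₀ / (2 * K)) = η₀ := by field_simp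
          linarith
        have h19 : 0 ≤ ‖x' - xbar‖ + ‖y - g x' - ybar‖ := by positivity
        have hQ1 : η * ρ ≤ η * (2 * K * (‖x' - xbar‖ + ‖y - g x' - ybar‖)) :=
          mul_le_mul_of_nonneg_left hρ'low hηpos.le
        have hQ2 : 2 * K * η * (‖x' - xbar‖ + ‖y - g x' - ybar‖) ≤
            η₀ * (‖x' - xbar‖ + ‖y - g x' - ybar‖) :=
          mul_le_mul_of_nonneg_right h17 h19
        have hexp3 : η * (2 * K * (‖x' - xbar‖ + ‖y - g x' - ybar‖)) =
            2 * K * η * (‖x' - xbar‖ + ‖y - g x' - ybar‖) := by ring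
        linarith only [hd'd, hdηρ, hQ1, hQ2, hexp3]
      have hccond : EMetric.infEdist (y - g x') (F x') ≤
          ENNReal.ofReal (η₀ * (‖x' - xbar‖ + ‖y - g x' - ybar‖) ^ ((1:ℝ)/1)) := by
        refine hinf.trans (ENNReal.ofReal_le_ofReal ?_)
        rw [show (1:ℝ)/1 = 1 by norm_num, Real.rpow_one]
        exact hd'η₀
      have happ := H x' (y - g x') hacond hbcond hccond
      rw [ENNReal.rpow_one] at happ
      refine happ.trans ?_
      calc ENNReal.ofReal τ * EMetric.infEdist (y - g x') (F x') ≤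
          ENNReal.ofReal τ * ENNReal.ofReal d' := mul_le_mul_right hinf _
        _ = ENNReal.ofReal (τ * d') := (ENNReal.ofReal_mul hτ.le).symm
    have hinit : EMetric.infEdist (y - g x) (F x) ≤ ENNReal.ofReal d := by
      rw [← hDdef, hddef, ENNReal.ofReal_toReal hDfin]
    obtain ⟨xi, hximem, hxidist⟩ := core_iteration F hF g x y lam τ τ₁ d hτ.le hττ₁ hlam hq
      hd0 S hS hLipS hHyp hinit
    have hximem' : xi ∈ {x' : X | y - g x' ∈ F x'} := hximem
    refine le_trans (EMetric.infEdist_le_edist_of_mem hximem') ?_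
    rw [edist_dist, dist_eq_norm]
    have h1 : ‖x - xi‖ ≤ T * d := by
      rw [norm_sub_rev]
      exact hxidist.trans_eq (by rw [hTdef, div_mul_eq_mul_div])
    calc ENNReal.ofReal ‖x - xi‖ ≤ ENNReal.ofReal (T * d) := ENNReal.ofReal_le_ofReal h1
      _ = ENNReal.ofReal T * ENNReal.ofReal d := ENNReal.ofReal_mul hT.le
      _ = ENNReal.ofReal T * D := by rw [hddef, ENNReal.ofReal_toReal hDfin]


end
end

section
/- Let X be a Banach space, Y a finite-dimensional normed space, g : X → Y continuously differentiable, K ⊆ Y closed convex, Φ(y) = {x : y ∈ g(x) − K}, x₀ ∈ Φ(0), d ∈ Y \ {0} and h ∈ X such that Dg(x₀)h − d ∈ T_K(g(x₀)). If G(x) := g(x) − K is directionally metrically regular at (x₀, 0) in the direction (h, d), then d ∈ int{Dg(x₀)X − T_K(g(x₀))} (Robinson's constraint qualification for the linearized problem holds at x₀ in direction d). -/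
open Filter Metric Set Topology
open scoped ENNReal NNReal Classical

noncomputable section

set_option maxHeartbeats 4000000

open scoped Pointwise

/-- The contingent (tangent) cone to the convex set `K` at `z ∈ K`:
`T_K(z) = {w : d(z + t w, K) = o(t) as t ↓ 0}`. -/
def tangentConeConv {Y : Type*} [NormedAddCommGroup Y] [NormedSpace ℝ Y]
    (K : Set Y) (z : Y) : Set Y :=
  {w : Y | Tendsto (fun t : ℝ => Metric.infDist (z + t • w) K / t) (𝓝[>] (0:ℝ)) (𝓝 0)}

/-- infDist to a convex set is a convex function (inequality form). -/
lemma infDist_combo_le {Y : Type*} [NormedAddCommGroup Y] [NormedSpace ℝ Y]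
    {K : Set Y} (hK : Convex ℝ K) (hne : K.Nonempty) (p q : Y) {a b : ℝ}
    (ha : 0 ≤ a) (hb : 0 ≤ b) (hab : a + b = 1) :
    infDist (a • p + b • q) K ≤ a * infDist p K + b * infDist q K := by
  refine le_of_forall_pos_le_add (fun ε hε => ?_)
  obtain ⟨k₁, hk₁, hd₁⟩ := (infDist_lt_iff hne).1
    (lt_add_of_pos_right _ (half_pos hε) : infDist p K < infDist p K + ε/2)
  obtain ⟨k₂, hk₂, hd₂⟩ := (infDist_lt_iff hne).1
    (lt_add_of_pos_right _ (half_pos hε) : infDist q K < infDist q K + ε/2)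
  have hmem : a • k₁ + b • k₂ ∈ K := hK hk₁ hk₂ ha hb hab
  have h1 : infDist (a • p + b • q) K ≤ dist (a • p + b • q) (a • k₁ + b • k₂) :=
    infDist_le_dist_of_mem hmem
  have h2 : dist (a • p + b • q) (a • k₁ + b • k₂) ≤ a * dist p k₁ + b * dist q k₂ := by
    rw [dist_eq_norm, dist_eq_norm, dist_eq_norm]
    have he : a • p + b • q - (a • k₁ + b • k₂) = a • (p - k₁) + b • (q - k₂) := by module
    rw [he]
    calc ‖a • (p - k₁) + b • (q - k₂)‖ ≤ ‖a • (p - k₁)‖ + ‖b • (q - k₂)‖ := norm_add_le _ _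
      _ = a * ‖p - k₁‖ + b * ‖q - k₂‖ := by
          rw [norm_smul, norm_smul, Real.norm_eq_abs, Real.norm_eq_abs,
            abs_of_nonneg ha, abs_of_nonneg hb]
  have h3 : a * dist p k₁ + b * dist q k₂
      ≤ a * (infDist p K + ε/2) + b * (infDist q K + ε/2) := by
    gcongr
  calc infDist (a • p + b • q) K ≤ a * (infDist p K + ε/2) + b * (infDist q K + ε/2) :=
        le_trans h1 (le_trans h2 h3)
    _ = a * infDist p K + b * infDist q K + (a+b) * (ε/2) := by ring
    _ ≤ a * infDist p K + b * infDist q K + ε := by rw [hab]; linarith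

lemma tangentConeConv_convex {Y : Type*} [NormedAddCommGroup Y] [NormedSpace ℝ Y]
    {K : Set Y} (hK : Convex ℝ K) (hne : K.Nonempty) (z : Y) :
    Convex ℝ (tangentConeConv K z) := by
  intro w₁ hw₁ w₂ hw₂ a b ha hb hab
  have key : ∀ t : ℝ, 0 < t →
      infDist (z + t • (a • w₁ + b • w₂)) K / t
        ≤ a * (infDist (z + t • w₁) K / t) + b * (infDist (z + t • w₂) K / t) := by
    intro t ht
    have halg : z + t • (a • w₁ + b • w₂) = a • (z + t • w₁) + b • (z + t • w₂) := by
      have he : a • (z + t • w₁) + b • (z + t • w₂)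
          = (a + b) • z + t • (a • w₁ + b • w₂) := by module
      rw [he, hab, one_smul]
    rw [halg, mul_div_assoc', mul_div_assoc', ← add_div]
    exact div_le_div_of_nonneg_right (infDist_combo_le hK hne _ _ ha hb hab) ht.le
  have hlim : Tendsto (fun t : ℝ =>
      a * (infDist (z + t • w₁) K / t) + b * (infDist (z + t • w₂) K / t))
      (𝓝[>] (0:ℝ)) (𝓝 0) := by
    have := ((hw₁.const_mul a).add (hw₂.const_mul b))
    simpa using this
  refine tendsto_of_tendsto_of_tendsto_of_le_of_le' tendsto_const_nhds hlim ?_ ?_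
  · filter_upwards [self_mem_nhdsWithin] with t ht
    exact div_nonneg infDist_nonneg (le_of_lt ht)
  · filter_upwards [self_mem_nhdsWithin] with t ht
    exact key t ht

/-- Scaled differences of points in K lie in the tangent cone. -/
lemma mem_tangentConeConv_of_mem {Y : Type*} [NormedAddCommGroup Y] [NormedSpace ℝ Y]
    {K : Set Y} (hK : Convex ℝ K) {z : Y} (hz : z ∈ K) {k : Y} (hk : k ∈ K)
    {t : ℝ} (ht : 0 < t) : (1/t) • (k - z) ∈ tangentConeConv K z := by
  have hev : ∀ᶠ s in 𝓝[>] (0:ℝ),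
      infDist (z + s • ((1/t) • (k - z))) K / s = 0 := by
    filter_upwards [Ioo_mem_nhdsGT_of_mem (⟨le_refl 0, ht⟩ : (0:ℝ) ∈ Ico 0 t)] with s hs
    have hst : s / t ∈ Icc (0:ℝ) 1 :=
      ⟨div_nonneg hs.1.le ht.le, (div_le_one ht).2 hs.2.le⟩
    have hmem : z + s • ((1/t) • (k - z)) ∈ K := by
      have he : z + s • ((1/t) • (k - z)) = (1 - s/t) • z + (s/t) • k := by
        rw [smul_smul]
        have he2 : s * (1/t) = s/t := by ring
        rw [he2]; module
      rw [he]
      exact hK hz hk (by linarith [hst.2]) hst.1 (by ring)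
    rw [infDist_zero_of_mem hmem, zero_div]
  exact Tendsto.congr' (EventuallyEq.symm hev) tendsto_const_nhds

lemma infEdist_setOf_sub {Y : Type*} [NormedAddCommGroup Y] (c y : Y) (K : Set Y) :
    EMetric.infEdist y {y' : Y | c - y' ∈ K} = EMetric.infEdist (c - y) K := by
  have hiso : Isometry (fun k : Y => c - k) :=
    Isometry.of_dist_eq (fun a b => by
      simp [dist_eq_norm, sub_sub_sub_cancel_left, norm_sub_rev])
  have him : {y' : Y | c - y' ∈ K} = (fun k : Y => c - k) '' K := by
    ext w
    constructor
    · intro hw; exact ⟨c - w, hw, by simp⟩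
    · rintro ⟨k, hk, rfl⟩; simpa using hk
  have hy : y = (fun k : Y => c - k) (c - y) := by simp
  rw [him]
  nth_rewrite 1 [hy]
  exact EMetric.infEdist_image hiso

/-- Lemma 4 of the paper: with `Y` finite dimensional, `x₀ ∈ Φ(0)`,
`d ≠ 0` and `Dg(x₀)h − d ∈ T_K(g(x₀))`, if `G = g − K` is directionally metrically
regular at `(x₀,0)` in direction `(h,d)`, then `d ∈ int (Dg(x₀)X − T_K(g(x₀)))`,
i.e. Robinson's constraint qualification holds for the linearized problem. -/
theorem robinson_cq_of_dirMetricRegular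
    {X Y : Type*} [NormedAddCommGroup X] [NormedSpace ℝ X] [CompleteSpace X]
    [NormedAddCommGroup Y] [NormedSpace ℝ Y] [FiniteDimensional ℝ Y]
    (g : X → Y) (hg : ContDiff ℝ 1 g) (K : Set Y) (hKcl : IsClosed K) (hKcv : Convex ℝ K)
    (x₀ : X) (hx₀ : g x₀ ∈ K) (d : Y) (hd : d ≠ 0) (h : X)
    (hhd : fderiv ℝ g x₀ h - d ∈ tangentConeConv K (g x₀))
    (hreg : ∃ τ > (0:ℝ),
      DirHolderRegular (fun x : X => {y : Y | g x - y ∈ K}) x₀ 0 h d 1 τ) :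
    d ∈ interior (Set.range (fderiv ℝ g x₀) - tangentConeConv K (g x₀)) := by
  obtain ⟨τ, hτ, δ, hδ, ε, hε, η, hη, hP⟩ := hreg
  set L := fderiv ℝ g x₀ with hLdef
  set z := g x₀ with hzdef
  set T := tangentConeConv K z with hTdef
  set S := Set.range (⇑L) - T with hSdef
  have hKne : K.Nonempty := ⟨z, hx₀⟩
  have hd0 : (0:ℝ) < ‖d‖ := norm_pos_iff.2 hd
  have hconvT : Convex ℝ T := tangentConeConv_convex hKcv hKne z
  have hconvR : Convex ℝ (Set.range (⇑L)) := by
    intro p hp q hq a b ha hb hab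
    obtain ⟨xp, rfl⟩ := hp
    obtain ⟨xq, rfl⟩ := hq
    exact ⟨a • xp + b • xq, by simp⟩
  have hconvS : Convex ℝ S := hconvR.sub hconvT
  have hdiff : HasFDerivAt g L x₀ := (hg.differentiable one_ne_zero x₀).hasFDerivAt
  have hhd' : Tendsto (fun t : ℝ => infDist (z + t • (L h - d)) K / t)
      (𝓝[>] (0:ℝ)) (𝓝 0) := hhd
  obtain ⟨r, hrdef⟩ : ∃ r : ℝ, r = min ε (min (η * ‖d‖ / 6) (‖d‖ / 2)) := ⟨_, rfl⟩
  have hr0 : 0 < r := by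
    rw [hrdef]; exact lt_min hε (lt_min (by positivity) (by positivity))
  have hrε : r ≤ ε := by rw [hrdef]; exact min_le_left _ _
  have hr6 : r ≤ η * ‖d‖ / 6 := by
    rw [hrdef]; exact le_trans (min_le_right _ _) (min_le_left _ _)
  have hr2 : r ≤ ‖d‖ / 2 := by
    rw [hrdef]; exact le_trans (min_le_right _ _) (min_le_right _ _)
  -- main claim : the ball of radius r around d is contained in the closure of S
  have claim : ∀ y' : Y, ‖y' - d‖ < r → y' ∈ closure S := by
    intro y' hy'
    have hy'norm : ‖d‖ / 2 ≤ ‖y'‖ := by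
      have h1 : ‖d‖ - ‖y'‖ ≤ ‖d - y'‖ := norm_sub_norm_le d y'
      have h2 : ‖d - y'‖ = ‖y' - d‖ := norm_sub_rev d y'
      linarith
    rw [Metric.mem_closure_iff]
    intro ε' hε'
    obtain ⟨A, hAdef⟩ : ∃ A : ℝ, A = r + η * ‖d‖ / 6 := ⟨_, rfl⟩
    have hA0 : 0 < A := by
      have h1 : 0 < η * ‖d‖ / 6 := by positivity
      rw [hAdef]; linarith
    obtain ⟨M, hMdef⟩ : ∃ M : ℝ, M = ‖h‖ + τ * A + 1 := ⟨_, rfl⟩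
    have hM0 : 0 < M := by
      rw [hMdef]; linarith [norm_nonneg h, mul_pos hτ hA0]
    have hhM : ‖h‖ ≤ M := by rw [hMdef]; linarith [mul_pos hτ hA0]
    obtain ⟨c₀, hc₀def⟩ : ∃ c : ℝ, c = η * ‖d‖ / (12 * (‖h‖ + 1)) := ⟨_, rfl⟩
    have hc₀0 : 0 < c₀ := by rw [hc₀def]; positivity
    obtain ⟨c', hc'def⟩ : ∃ c : ℝ, c = min (ε' / (2 * M)) c₀ := ⟨_, rfl⟩
    have hc'0 : 0 < c' := by rw [hc'def]; exact lt_min (by positivity) hc₀0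
    obtain ⟨ρ, hρ0, hρ⟩ : ∃ ρ > (0:ℝ), ∀ x : X, dist x x₀ < ρ →
        ‖g x - z - L (x - x₀)‖ ≤ c' * ‖x - x₀‖ := by
      have hev := hdiff.isLittleO.def hc'0
      rw [Metric.eventually_nhds_iff] at hev
      obtain ⟨ρ, hρ0, hρ⟩ := hev
      exact ⟨ρ, hρ0, fun x hx => hρ hx⟩
    obtain ⟨σ, hσdef⟩ : ∃ s : ℝ, s = η * ‖d‖ / 12 := ⟨_, rfl⟩
    have hσ0 : 0 < σ := by rw [hσdef]; positivity
    obtain ⟨B, hBdef⟩ : ∃ b : ℝ, b = ‖h‖ + ‖y'‖ + 1 := ⟨_, rfl⟩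
    have hB0 : 0 < B := by rw [hBdef]; positivity
    obtain ⟨tmax, htmaxdef⟩ : ∃ tm : ℝ, tm = min (δ / B) (ρ / M) := ⟨_, rfl⟩
    have htmax0 : 0 < tmax := by
      rw [htmaxdef]; exact lt_min (by positivity) (by positivity)
    have hEv : ∀ᶠ t in 𝓝[>] (0:ℝ),
        infDist (z + t • (L h - d)) K / t < σ ∧ t ∈ Ioo (0:ℝ) tmax :=
      (hhd'.eventually (gt_mem_nhds hσ0)).and
        (Ioo_mem_nhdsGT_of_mem ⟨le_refl 0, htmax0⟩)
    obtain ⟨t, hfr, ht0, httmax⟩ := hEv.exists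
    -- bounds from t < tmax
    have htδ : t * (‖h‖ + ‖y'‖) < δ := by
      have h1 : t < δ / B := lt_of_lt_of_le httmax (by rw [htmaxdef]; exact min_le_left _ _)
      have h2 : t * B < δ := (lt_div_iff₀ hB0).1 h1
      rw [hBdef] at h2
      nlinarith
    have htρ : t * M < ρ := by
      have h1 : t < ρ / M := lt_of_lt_of_le httmax (by rw [htmaxdef]; exact min_le_right _ _)
      exact (lt_div_iff₀ hM0).1 h1
    have hinfz : infDist (z + t • (L h - d)) K < σ * t := by
      rw [div_lt_iff₀ ht0] at hfr
      linarith
    have hxt : ‖x₀ + t • h - x₀‖ = t * ‖h‖ := by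
      simp [norm_smul, abs_of_pos ht0]
    -- the feasibility estimate
    have hc'h : c' * ‖h‖ ≤ σ := by
      have h1 : c' ≤ c₀ := by rw [hc'def]; exact min_le_right _ _
      have h2 : c' * ‖h‖ ≤ c₀ * (‖h‖ + 1) :=
        mul_le_mul h1 (by linarith [norm_nonneg h]) (norm_nonneg h) hc₀0.le
      have h3 : c₀ * (‖h‖ + 1) = σ := by
        rw [hc₀def, hσdef]
        field_simp
        try ring
      linarith
    have hkey : infDist (g (x₀ + t • h) - t • y') K ≤ t * A := by
      have h1 : infDist (g (x₀ + t • h) - t • y') K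
          ≤ infDist (z + t • (L h - d)) K
            + dist (g (x₀ + t • h) - t • y') (z + t • (L h - d)) :=
        infDist_le_infDist_add_dist
      have h2 : dist (g (x₀ + t • h) - t • y') (z + t • (L h - d))
          ≤ c' * (t * ‖h‖) + t * ‖y' - d‖ := by
        rw [dist_eq_norm]
        have hLt : L (x₀ + t • h - x₀) = t • L h := by
          rw [show x₀ + t • h - x₀ = t • h by abel, map_smul]
        have halg : g (x₀ + t • h) - t • y' - (z + t • (L h - d))
            = (g (x₀ + t • h) - z - L (x₀ + t • h - x₀)) + t • (d - y') := by
          rw [hLt]; module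
        rw [halg]
        have h3 : ‖g (x₀ + t • h) - z - L (x₀ + t • h - x₀)‖ ≤ c' * (t * ‖h‖) := by
          have hd1 : dist (x₀ + t • h) x₀ < ρ := by
            rw [dist_eq_norm, hxt]
            have h4 : t * ‖h‖ ≤ t * M := mul_le_mul_of_nonneg_left hhM ht0.le
            linarith
          have := hρ (x₀ + t • h) hd1
          rwa [hxt] at this
        have h5 : ‖t • (d - y')‖ = t * ‖y' - d‖ := by
          rw [norm_smul, Real.norm_eq_abs, abs_of_pos ht0, norm_sub_rev]
        calc ‖(g (x₀ + t • h) - z - L (x₀ + t • h - x₀)) + t • (d - y')‖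
            ≤ ‖g (x₀ + t • h) - z - L (x₀ + t • h - x₀)‖ + ‖t • (d - y')‖ := norm_add_le _ _
          _ ≤ c' * (t * ‖h‖) + t * ‖y' - d‖ := by rw [h5]; exact add_le_add h3 le_rfl
      have h4 : c' * (t * ‖h‖) ≤ σ * t := by
        calc c' * (t * ‖h‖) = (c' * ‖h‖) * t := by ring
          _ ≤ σ * t := mul_le_mul_of_nonneg_right hc'h ht0.le
      have h5 : t * ‖y' - d‖ ≤ t * r := mul_le_mul_of_nonneg_left hy'.le ht0.le
      have h6 : σ * t + σ * t + t * r = t * A := by rw [hAdef, hσdef]; ring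
      linarith
    -- apply the regularity hypothesis
    have hsum : ‖x₀ + t • h - x₀‖ + ‖t • y' - 0‖ < δ := by
      rw [hxt, sub_zero, norm_smul, Real.norm_eq_abs, abs_of_pos ht0]
      nlinarith
    have hcone : (x₀ + t • h - x₀, t • y' - 0) ∈ coneBall2 h d ε := by
      refine ⟨t, ht0.le, h, y', ?_, ?_⟩
      · simpa using lt_of_lt_of_le hy' hrε
      · simp
    have hFx : EMetric.infEdist (t • y') {y : Y | g (x₀ + t • h) - y ∈ K}
        = ENNReal.ofReal (infDist (g (x₀ + t • h) - t • y') K) := by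
      rw [infEdist_setOf_sub]
      rw [Metric.infDist, ENNReal.ofReal_toReal (Metric.infEdist_ne_top hKne)]
      rfl
    have hAbound : A ≤ η * (‖h‖ + ‖y'‖) := by
      have h2' : η * (‖d‖ / 2) ≤ η * ‖y'‖ := mul_le_mul_of_nonneg_left hy'norm hη.le
      have h3' : 0 ≤ η * ‖h‖ := mul_nonneg hη.le (norm_nonneg h)
      rw [hAdef]
      nlinarith [hr6]
    have hcond : EMetric.infEdist (t • y') {y : Y | g (x₀ + t • h) - y ∈ K}
        ≤ ENNReal.ofReal (η * ((‖x₀ + t • h - x₀‖ + ‖t • y' - 0‖)) ^ (1/(1:ℝ))) := by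
      rw [hFx]
      apply ENNReal.ofReal_le_ofReal
      rw [sub_zero, hxt, norm_smul, Real.norm_eq_abs, abs_of_pos ht0,
        show (1/(1:ℝ)) = 1 by norm_num, Real.rpow_one]
      calc infDist (g (x₀ + t • h) - t • y') K ≤ t * A := hkey
        _ ≤ η * (t * ‖h‖ + t * ‖y'‖) := by
            nlinarith [mul_le_mul_of_nonneg_left hAbound ht0.le]
    have hconc := hP (x₀ + t • h) (t • y') hsum hcone hcond
    rw [ENNReal.rpow_one, hFx] at hconc
    have hRHS : ENNReal.ofReal τ * ENNReal.ofReal (infDist (g (x₀ + t • h) - t • y') K)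
        ≤ ENNReal.ofReal (τ * (t * A)) := by
      rw [← ENNReal.ofReal_mul hτ.le]
      exact ENNReal.ofReal_le_ofReal (mul_le_mul_of_nonneg_left hkey hτ.le)
    have hlt : EMetric.infEdist (x₀ + t • h) {x' : X | g x' - t • y' ∈ K}
        < ENNReal.ofReal (τ * (t * A) + t) := by
      refine lt_of_le_of_lt (hconc.trans hRHS) ?_
      have hpos : 0 < τ * (t * A) + t := by positivity
      exact (ENNReal.ofReal_lt_ofReal_iff hpos).2 (by linarith)
    obtain ⟨x', hx'mem, hx'd⟩ := EMetric.infEdist_lt_iff.1 hlt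
    have hx'K : g x' - t • y' ∈ K := hx'mem
    have hx'dist : dist (x₀ + t • h) x' < τ * (t * A) + t := by
      rwa [edist_lt_ofReal] at hx'd
    have hx'x₀ : ‖x' - x₀‖ < t * M := by
      have h1 : ‖x' - x₀‖ ≤ ‖x' - (x₀ + t • h)‖ + ‖x₀ + t • h - x₀‖ := by
        rw [← sub_add_sub_cancel x' (x₀ + t • h) x₀]
        exact norm_add_le _ _
      have h2 : ‖x' - (x₀ + t • h)‖ = dist (x₀ + t • h) x' := by
        rw [dist_eq_norm, norm_sub_rev]
      rw [h2, hxt] at h1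
      have h3 : t * M = (τ * (t * A) + t) + t * ‖h‖ := by rw [hMdef]; ring
      linarith
    have hρx' : ‖g x' - z - L (x' - x₀)‖ ≤ c' * ‖x' - x₀‖ := by
      apply hρ x'
      rw [dist_eq_norm]
      exact lt_trans hx'x₀ htρ
    have htne : t ≠ 0 := ht0.ne'
    refine ⟨L ((1/t) • (x' - x₀)) - (1/t) • ((g x' - t • y') - z), ?_, ?_⟩
    · exact Set.sub_mem_sub (mem_range_self _)
        (mem_tangentConeConv_of_mem hKcv hx₀ hx'K ht0)
    · have hyp : y' - (L ((1/t) • (x' - x₀)) - (1/t) • ((g x' - t • y') - z))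
          = (1/t) • (g x' - z - L (x' - x₀)) := by
        rw [map_smul]
        match_scalars <;> field_simp <;> ring
      rw [dist_eq_norm, hyp, norm_smul, Real.norm_eq_abs,
        abs_of_pos (by positivity : (0:ℝ) < 1/t)]
      have hb1 : (1/t) * ‖g x' - z - L (x' - x₀)‖ ≤ (1/t) * (c' * (t * M)) := by
        apply mul_le_mul_of_nonneg_left _ (by positivity)
        calc ‖g x' - z - L (x' - x₀)‖ ≤ c' * ‖x' - x₀‖ := hρx'
          _ ≤ c' * (t * M) := mul_le_mul_of_nonneg_left hx'x₀.le hc'0.le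
      have hb2 : (1/t) * (c' * (t * M)) = c' * M := by
        field_simp
        try ring
      have hb3 : c' * M ≤ (ε' / (2 * M)) * M := by
        refine mul_le_mul_of_nonneg_right ?_ hM0.le
        rw [hc'def]; exact min_le_left _ _
      have hb4 : (ε' / (2 * M)) * M = ε' / 2 := by
        field_simp
        try ring
      calc (1/t) * ‖g x' - z - L (x' - x₀)‖ ≤ c' * M := by rw [← hb2]; exact hb1
        _ ≤ ε' / 2 := by rw [← hb4]; exact hb3
        _ < ε' := by linarith
  -- from the claim : ball d r ⊆ closure S, deduce d ∈ interior S
  have hball : ball d r ⊆ closure S := by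
    intro y' hy'
    exact claim y' (by rwa [mem_ball, dist_eq_norm] at hy')
  have hspan : affineSpan ℝ S = ⊤ := by
    have h1 : affineSpan ℝ (ball d r) = ⊤ :=
      isOpen_ball.affineSpan_eq_top (nonempty_ball.2 hr0)
    have h2 : closure S ⊆ (affineSpan ℝ S : Set Y) :=
      closure_minimal (subset_affineSpan ℝ S)
        (affineSpan ℝ S).closed_of_finiteDimensional
    have h3 : affineSpan ℝ (ball d r) ≤ affineSpan ℝ S :=
      affineSpan_le.2 (fun y' hy' => h2 (hball hy'))
    rw [h1] at h3
    exact top_unique h3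
  obtain ⟨x_int, hx_int⟩ := (hconvS.interior_nonempty_iff_affineSpan_eq_top).2 hspan
  have hn0 : (0:ℝ) < ‖d - x_int‖ + 1 := by positivity
  obtain ⟨θ, hθdef⟩ : ∃ th : ℝ, th = r / (2 * (‖d - x_int‖ + 1)) := ⟨_, rfl⟩
  have hθ0 : 0 < θ := by rw [hθdef]; positivity
  have hd' : d + θ • (d - x_int) ∈ closure S := by
    apply hball
    rw [mem_ball, dist_eq_norm]
    have he : ‖d + θ • (d - x_int) - d‖ = θ * ‖d - x_int‖ := by
      simp [norm_smul, abs_of_pos hθ0]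
    rw [he]
    have h1 : θ * ‖d - x_int‖ ≤ θ * (‖d - x_int‖ + 1) :=
      mul_le_mul_of_nonneg_left (by linarith) hθ0.le
    have h2 : θ * (‖d - x_int‖ + 1) = r / 2 := by
      rw [hθdef]
      field_simp
      try ring
    linarith
  have h1θ : (0:ℝ) < 1 + θ := by positivity
  have hab : θ / (1 + θ) + 1 / (1 + θ) = 1 := by
    field_simp
    try ring
  have hcombo := hconvS.combo_interior_closure_mem_interior hx_int hd'
      (a := θ / (1 + θ)) (b := 1 / (1 + θ)) (by positivity) (by positivity) hab
  have heq : (θ / (1 + θ)) • x_int + (1 / (1 + θ)) • (d + θ • (d - x_int)) = d := by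
    have hne : (1:ℝ) + θ ≠ 0 := h1θ.ne'
    match_scalars <;> field_simp <;> ring
  rwa [heq] at hcombo

end
end
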